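/- arXiv:2303.00096 — 6 statements merged into one kernel-verified Lean document; each statement's English description precedes it below -/
import Mathlib

section
/- Let f : ℝⁿ → ℝ be C² satisfying the PL inequality with constant μ around a local minimum x̄ with solution set S. Then f satisfies the Morse–Bott property with constant μ at x̄: S is a C¹ submanifold near x̄, ker ∇²f(x̄) = T_{x̄}S, and ⟨v, ∇²f(x̄)v⟩ ≥ μ‖v‖² for all v ∈ N_{x̄}S. -/
open Metric Filter Topology InnerProductSpace
open scoped RealInnerProductSpace

variable {E : Type*} [NormedAddCommGroup E] [InnerProductSpace ℝ E] [CompleteSpace E]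

lemma inner_gradient_apply (f : E → ℝ) (x w : E) :
    ⟪gradient f x, w⟫ = fderiv ℝ f x w := toDual_symm_apply

lemma contDiff_gradient {f : E → ℝ} (hf : ContDiff ℝ 2 f) :
    ContDiff ℝ 1 (gradient f) := by
  have h2 : ContDiff ℝ ((1 : ℕ) + 1) f := by exact_mod_cast hf
  exact ((toDual ℝ E).symm.contDiff).comp (contDiff_succ_iff_fderiv.mp h2).2.2

lemma fderiv_gradient_eq {f : E → ℝ} (hf : ContDiff ℝ 2 f) (x : E) :
    fderiv ℝ (gradient f) x =
      ((toDual ℝ E).symm.toContinuousLinearEquiv.toContinuousLinearMap).comp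
        (fderiv ℝ (fderiv ℝ f) x) := by
  have h2 : ContDiff ℝ ((1 : ℕ) + 1) f := by exact_mod_cast hf
  have hF : ContDiff ℝ 1 (fderiv ℝ f) := (contDiff_succ_iff_fderiv.mp h2).2.2
  have hFd : DifferentiableAt ℝ (fderiv ℝ f) x := (hF.differentiable one_ne_zero).differentiableAt
  exact (((toDual ℝ E).symm.toContinuousLinearEquiv.toContinuousLinearMap).hasFDerivAt.comp
    x hFd.hasFDerivAt).fderiv

lemma fderiv_gradient_symm {f : E → ℝ} (hf : ContDiff ℝ 2 f) (x v w : E) :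
    ⟪fderiv ℝ (gradient f) x v, w⟫ = ⟪fderiv ℝ (gradient f) x w, v⟫ := by
  have h2 : ContDiff ℝ ((1 : ℕ) + 1) f := by exact_mod_cast hf
  have hF : ContDiff ℝ 1 (fderiv ℝ f) := (contDiff_succ_iff_fderiv.mp h2).2.2
  have hFd : DifferentiableAt ℝ (fderiv ℝ f) x := (hF.differentiable one_ne_zero).differentiableAt
  have hsymm := second_derivative_symmetric (f := f) (f' := fderiv ℝ f)
    (f'' := fderiv ℝ (fderiv ℝ f) x) (x := x)
    (fun y => ((h2.differentiable (by norm_num)) y).hasFDerivAt) hFd.hasFDerivAt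
  rw [fderiv_gradient_eq hf]
  simp only [ContinuousLinearMap.comp_apply,
    LinearIsometryEquiv.coe_toContinuousLinearEquiv,
    ContinuousLinearEquiv.coe_coe]
  rw [toDual_symm_apply, toDual_symm_apply, hsymm]

lemma grad_approx {f : E → ℝ} (hf : ContDiff ℝ 2 f) {H : E →L[ℝ] E} {s : Set E}
    (hs : Convex ℝ s) {ε : ℝ}
    (hε : ∀ z ∈ s, ‖fderiv ℝ (gradient f) z - H‖ ≤ ε)
    {x y : E} (hx : x ∈ s) (hy : y ∈ s) :
    ‖gradient f y - gradient f x - H (y - x)‖ ≤ ε * ‖y - x‖ := by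
  have hG := contDiff_gradient hf
  have key : ∀ z ∈ s, HasFDerivWithinAt (gradient f) (fderiv ℝ (gradient f) z) s z :=
    fun z _ => ((hG.differentiable one_ne_zero z).hasFDerivAt).hasFDerivWithinAt
  exact Convex.norm_image_sub_le_of_norm_hasFDerivWithin_le' key hε hs hx hy

lemma value_approx {f : E → ℝ} (hf : ContDiff ℝ 2 f) {H : E →L[ℝ] E} {s : Set E}
    (hs : Convex ℝ s) {ε : ℝ}
    (hε : ∀ z ∈ s, ‖fderiv ℝ (gradient f) z - H‖ ≤ ε)
    {x y : E} (hx : x ∈ s) (hy : y ∈ s) :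
    |f y - f x - ⟪gradient f x, y - x⟫ - 1 / 2 * ⟪H (y - x), y - x⟫| ≤ ε * ‖y - x‖ ^ 2 := by
  have hε0 : 0 ≤ ε := le_trans (norm_nonneg _) (hε x hx)
  set w := y - x with hwdef
  have hfd : Differentiable ℝ f := hf.differentiable (by norm_num)
  set m : ℝ → ℝ := fun t => f (x + t • w) - t * ⟪gradient f x, w⟫ - t ^ 2 / 2 * ⟪H w, w⟫ with hm
  set m' : ℝ → ℝ := fun t =>
    ⟪gradient f (x + t • w), w⟫ - ⟪gradient f x, w⟫ - t * ⟪H w, w⟫ with hm'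
  have hline : ∀ t : ℝ, HasDerivAt (fun t : ℝ => x + t • w) w t := by
    intro t
    simpa using ((hasDerivAt_id t).smul_const w).const_add x
  have hmd : ∀ t : ℝ, HasDerivAt m (m' t) t := by
    intro t
    have h1 : HasDerivAt (fun t : ℝ => f (x + t • w)) (fderiv ℝ f (x + t • w) w) t :=
      (hfd (x + t • w)).hasFDerivAt.comp_hasDerivAt t (hline t)
    rw [← inner_gradient_apply] at h1
    have h2 : HasDerivAt (fun t : ℝ => t * ⟪gradient f x, w⟫) ⟪gradient f x, w⟫ t := by
      simpa using hasDerivAt_mul_const (⟪gradient f x, w⟫)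
    have h3 : HasDerivAt (fun t : ℝ => t ^ 2 / 2 * ⟪H w, w⟫) (t * ⟪H w, w⟫) t := by
      have h := ((hasDerivAt_pow 2 t).div_const 2).mul_const (⟪H w, w⟫)
      exact h.congr_deriv (by norm_num)
    exact (h1.sub h2).sub h3
  have bound : ∀ t ∈ Set.Ico (0 : ℝ) 1, ‖m' t‖ ≤ ε * ‖w‖ ^ 2 := by
    intro t ht
    have hz : x + t • w ∈ s := hs.add_smul_sub_mem hx hy ⟨ht.1, le_of_lt ht.2⟩
    have heq : m' t = ⟪gradient f (x + t • w) - gradient f x - H ((x + t • w) - x), w⟫ := by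
      simp only [hm', inner_sub_left]
      have : (x + t • w) - x = t • w := by abel
      rw [this, map_smul, real_inner_smul_left]
    rw [heq]
    have h1 := abs_real_inner_le_norm
      (gradient f (x + t • w) - gradient f x - H ((x + t • w) - x)) w
    have h2 := grad_approx hf hs hε hx hz
    have h3 : ‖(x + t • w) - x‖ = t * ‖w‖ := by
      have : (x + t • w) - x = t • w := by abel
      rw [this, norm_smul, Real.norm_eq_abs, abs_of_nonneg ht.1]
    rw [Real.norm_eq_abs]
    calc |⟪gradient f (x + t • w) - gradient f x - H ((x + t • w) - x), w⟫|
        ≤ ‖gradient f (x + t • w) - gradient f x - H ((x + t • w) - x)‖ * ‖w‖ := h1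
      _ ≤ (ε * ‖(x + t • w) - x‖) * ‖w‖ :=
          mul_le_mul_of_nonneg_right h2 (norm_nonneg w)
      _ = ε * (t * ‖w‖) * ‖w‖ := by rw [h3]
      _ ≤ ε * ‖w‖ ^ 2 := by
          nlinarith [mul_nonneg (mul_nonneg (sub_nonneg.2 ht.2.le) hε0)
            (mul_nonneg (norm_nonneg w) (norm_nonneg w))]
  have key := norm_image_sub_le_of_norm_deriv_le_segment'
    (f := m) (f' := m') (C := ε * ‖w‖ ^ 2) (a := 0) (b := 1)
    (fun t _ => (hmd t).hasDerivWithinAt) bound 1 (by norm_num)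
  have hm1 : m 1 = f y - ⟪gradient f x, w⟫ - 1 / 2 * ⟪H w, w⟫ := by
    simp only [hm, one_smul, one_pow]
    rw [show x + w = y by rw [hwdef]; abel]
    ring
  have hm0 : m 0 = f x := by simp [hm]
  rw [hm1, hm0, Real.norm_eq_abs] at key
  calc |f y - f x - ⟪gradient f x, w⟫ - 1 / 2 * ⟪H w, w⟫|
      = |f y - ⟪gradient f x, w⟫ - 1 / 2 * ⟪H w, w⟫ - f x| := by ring_nf
    _ ≤ ε * ‖w‖ ^ 2 * (1 - 0) := key
    _ = ε * ‖w‖ ^ 2 := by ring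

lemma spec_bound [FiniteDimensional ℝ E] {H : E →L[ℝ] E}
    (hsym : ∀ v w : E, ⟪H v, w⟫ = ⟪v, H w⟫) {μ : ℝ}
    (heig : ∀ (t : ℝ) (v : E), H v = t • v → ‖v‖ = 1 → t = 0 ∨ μ ≤ t) :
    ∀ v ∈ (LinearMap.ker (H : E →ₗ[ℝ] E))ᗮ, μ * ‖v‖ ^ 2 ≤ ⟪v, H v⟫ := by
  intro v hv
  have hsym' : (H : E →ₗ[ℝ] E).IsSymmetric := fun a b => hsym a b
  set N := Module.finrank ℝ E with hN
  set b := hsym'.eigenvectorBasis rfl with hb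
  set lam := hsym'.eigenvalues (n := N) rfl with hlam
  have happly : ∀ i, H (b i) = lam i • b i := fun i => by
    have h := hsym'.apply_eigenvectorBasis rfl i
    rwa [ContinuousLinearMap.coe_coe] at h
  have hnorm1 : ∀ i, ‖b i‖ = 1 := fun i => b.orthonormal.1 i
  have hcase : ∀ i, lam i = 0 ∨ μ ≤ lam i := fun i =>
    heig (lam i) (b i) (happly i) (hnorm1 i)
  have hHv : ⟪v, H v⟫ = ∑ i, lam i * (⟪v, b i⟫ * ⟪b i, v⟫) := by
    rw [← b.sum_inner_mul_inner v (H v)]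
    congr 1; funext i
    have : ⟪b i, H v⟫ = lam i * ⟪b i, v⟫ := by
      rw [← hsym (b i) v, happly i, real_inner_smul_left]
    rw [this]; ring
  have hnv : ‖v‖ ^ 2 = ∑ i, ⟪v, b i⟫ * ⟪b i, v⟫ := by
    rw [b.sum_inner_mul_inner v v, real_inner_self_eq_norm_sq]
  rw [hHv, hnv, Finset.mul_sum]
  apply Finset.sum_le_sum
  intro i _
  rcases hcase i with h0 | hge
  · have hker : b i ∈ LinearMap.ker (H : E →ₗ[ℝ] E) := by
      rw [LinearMap.mem_ker, ContinuousLinearMap.coe_coe, happly i, h0, zero_smul]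
    have : ⟪b i, v⟫ = 0 := hv (b i) hker
    rw [this]; ring_nf; simp
  · have hsq : 0 ≤ ⟪v, b i⟫ * ⟪b i, v⟫ := by
      rw [real_inner_comm v (b i)]; exact mul_self_nonneg _
    exact mul_le_mul_of_nonneg_right hge hsq

set_option maxHeartbeats 2000000 in
set_option synthInstance.maxHeartbeats 200000 in
/-- PL implies the Morse–Bott property with the same constant: the solution set `S` is a C¹
submanifold near `xb` (given by a local defining function `φ` with surjective differential),
the kernel of the Hessian at `xb` equals the tangent space `ker Dφ(xb)`, and the Hessian is
`μ`-positive definite on the normal space. -/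
theorem pl_implies_mb {n : ℕ}
    (f : EuclideanSpace ℝ (Fin n) → ℝ) (xb : EuclideanSpace ℝ (Fin n))
    (hf : ContDiff ℝ 2 f) (hmin : IsLocalMin f xb)
    (μ : ℝ) (hμ : 0 < μ)
    (S : Set (EuclideanSpace ℝ (Fin n)))
    (hS : S = {y | IsLocalMin f y ∧ f y = f xb})
    (hPL : ∀ᶠ x in 𝓝 xb, f x - f xb ≤ (1 / (2 * μ)) * ‖gradient f x‖ ^ 2) :
    ∃ (d : ℕ) (U : Set (EuclideanSpace ℝ (Fin n)))
      (φ : EuclideanSpace ℝ (Fin n) → EuclideanSpace ℝ (Fin d)),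
      IsOpen U ∧ xb ∈ U ∧ ContDiffOn ℝ 1 φ U ∧
      (∀ x ∈ U, Function.Surjective (fderiv ℝ φ x)) ∧
      S ∩ U = {x ∈ U | φ x = 0} ∧
      LinearMap.ker (fderiv ℝ (gradient f) xb : EuclideanSpace ℝ (Fin n) →ₗ[ℝ] EuclideanSpace ℝ (Fin n)) =
        LinearMap.ker (fderiv ℝ φ xb : EuclideanSpace ℝ (Fin n) →ₗ[ℝ] EuclideanSpace ℝ (Fin d)) ∧
      ∀ v ∈ (LinearMap.ker (fderiv ℝ φ xb : EuclideanSpace ℝ (Fin n) →ₗ[ℝ] EuclideanSpace ℝ (Fin d)))ᗮ,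
        μ * ‖v‖ ^ 2 ≤ ⟪v, fderiv ℝ (gradient f) xb v⟫ := by
  have hE : True := trivial
  set G := gradient f with hGdef
  set H := fderiv ℝ G xb with hHdef
  have hGc : ContDiff ℝ 1 G := contDiff_gradient hf
  have hGd : Differentiable ℝ G := hGc.differentiable one_ne_zero
  have hGxb : G xb = 0 := by
    rw [hGdef]
    unfold gradient
    rw [hmin.fderiv_eq_zero, map_zero]
  have hsym : ∀ v w : EuclideanSpace ℝ (Fin n), ⟪H v, w⟫ = ⟪v, H w⟫ := by
    intro v w
    rw [fderiv_gradient_symm hf xb v w, real_inner_comm]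
  have hHessCont : Continuous (fun z => fderiv ℝ G z) := hGc.continuous_fderiv one_ne_zero
  -- for every ε > 0 there is a good ball
  have hball : ∀ ε : ℝ, 0 < ε → ∃ r : ℝ, 0 < r ∧
      (∀ z ∈ ball xb r, ‖fderiv ℝ G z - H‖ ≤ ε) ∧
      (∀ z ∈ ball xb r, f xb ≤ f z) ∧
      (∀ z ∈ ball xb r, f z - f xb ≤ 1 / (2 * μ) * ‖G z‖ ^ 2) := by
    intro ε hε
    have hc : ContinuousAt (fun z => ‖fderiv ℝ G z - H‖) xb :=
      ((hHessCont.sub continuous_const).norm).continuousAt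
    have hval : ‖fderiv ℝ G xb - H‖ < ε := by
      rw [← hHdef, sub_self, norm_zero]; exact hε
    have h1 : ∀ᶠ z in 𝓝 xb, ‖fderiv ℝ G z - H‖ ≤ ε :=
      (hc.eventually_lt_const hval).mono fun z hz => hz.le
    have hcomb := (h1.and hmin).and hPL
    rw [Metric.eventually_nhds_iff_ball] at hcomb
    obtain ⟨r, hr, hrdata⟩ := hcomb
    exact ⟨r, hr, fun z hz => (hrdata z hz).1.1, fun z hz => (hrdata z hz).1.2,
      fun z hz => (hrdata z hz).2⟩
  -- eigenvalues of H are 0 or ≥ μ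
  have heig : ∀ (t : ℝ) (v : EuclideanSpace ℝ (Fin n)), H v = t • v → ‖v‖ = 1 →
      t = 0 ∨ μ ≤ t := by
    intro t v hvt hv1
    have hvv : ⟪v, v⟫ = 1 := by
      rw [real_inner_self_eq_norm_sq, hv1]; norm_num
    have hstep : ∀ ε : ℝ, 0 < ε → ∃ τ : ℝ, 0 < τ ∧
        (f xb ≤ f (xb + τ • v)) ∧
        |f (xb + τ • v) - f xb - τ ^ 2 * t / 2| ≤ ε * τ ^ 2 ∧
        ‖G (xb + τ • v)‖ ≤ (|t| + ε) * τ ∧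
        (f (xb + τ • v) - f xb ≤ 1 / (2 * μ) * ‖G (xb + τ • v)‖ ^ 2) := by
      intro ε hε
      obtain ⟨r, hr, hHb, hgeb, hplb⟩ := hball ε hε
      set τ := r / 2 with hτ
      have hτ0 : 0 < τ := by positivity
      have hymem : xb + τ • v ∈ ball xb r := by
        rw [mem_ball_iff_norm, add_sub_cancel_left, norm_smul, Real.norm_eq_abs,
          abs_of_pos hτ0, hv1, mul_one]
        linarith
      have hxbmem : xb ∈ ball xb r := mem_ball_self hr
      refine ⟨τ, hτ0, hgeb _ hymem, ?_, ?_, hplb _ hymem⟩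
      · have hT2 := value_approx hf (convex_ball xb r) hHb hxbmem hymem
        rw [← hGdef, hGxb] at hT2
        simp only [add_sub_cancel_left, inner_zero_left] at hT2
        have hinner : ⟪H (τ • v), τ • v⟫ = τ ^ 2 * t := by
          rw [map_smul, hvt, smul_smul, real_inner_smul_left, real_inner_smul_right, hvv]
          ring
        rw [hinner] at hT2
        have hnrm : ‖τ • v‖ = τ := by
          rw [norm_smul, Real.norm_eq_abs, abs_of_pos hτ0, hv1, mul_one]
        rw [hnrm] at hT2
        calc |f (xb + τ • v) - f xb - τ ^ 2 * t / 2|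
            = |f (xb + τ • v) - f xb - 0 - 1 / 2 * (τ ^ 2 * t)| := by ring_nf
          _ ≤ ε * τ ^ 2 := hT2
      · have hT1 := grad_approx hf (convex_ball xb r) hHb hxbmem hymem
        rw [← hGdef, hGxb, sub_zero, add_sub_cancel_left] at hT1
        have hnrm : ‖τ • v‖ = τ := by
          rw [norm_smul, Real.norm_eq_abs, abs_of_pos hτ0, hv1, mul_one]
        rw [hnrm] at hT1
        have hHτ : ‖H (τ • v)‖ = |t| * τ := by
          rw [map_smul, hvt, smul_smul, norm_smul, Real.norm_eq_abs, abs_mul,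
            abs_of_pos hτ0, hv1, mul_one, mul_comm]
        calc ‖G (xb + τ • v)‖
            = ‖(G (xb + τ • v) - H (τ • v)) + H (τ • v)‖ := by congr 1; abel
          _ ≤ ‖G (xb + τ • v) - H (τ • v)‖ + ‖H (τ • v)‖ := norm_add_le _ _
          _ ≤ ε * τ + |t| * τ := add_le_add hT1 (le_of_eq hHτ)
          _ = (|t| + ε) * τ := by ring
    have ht0 : 0 ≤ t := by
      by_contra hlt
      push_neg at hlt
      obtain ⟨τ, hτ0, hge1, habs, _, _⟩ := hstep (-t / 4) (by linarith)
      have h1 := le_of_abs_le habs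
      generalize hFd : f (xb + τ • v) - f xb = Fd at h1 hge1
      have hq : 0 < τ * τ := mul_pos hτ0 hτ0
      nlinarith [hq, h1, hlt]
    have hB : ∀ ε : ℝ, 0 < ε → t / 2 - ε ≤ (t + ε) ^ 2 / (2 * μ) := by
      intro ε hε
      obtain ⟨τ, hτ0, hge1, habs, hgn, hpl1⟩ := hstep ε hε
      rw [abs_of_nonneg ht0] at hgn
      have h1 : -(ε * τ ^ 2) ≤ f (xb + τ • v) - f xb - τ ^ 2 * t / 2 :=
        neg_le_of_abs_le habs
      have h2 : ‖G (xb + τ • v)‖ ^ 2 ≤ ((t + ε) * τ) ^ 2 := by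
        apply sq_le_sq' _ hgn
        nlinarith [norm_nonneg (G (xb + τ • v))]
      have h3 : f (xb + τ • v) - f xb ≤ 1 / (2 * μ) * ((t + ε) * τ) ^ 2 := by
        refine le_trans hpl1 ?_
        apply mul_le_mul_of_nonneg_left h2
        positivity
      have hτ2 : 0 < τ ^ 2 := by positivity
      have h3' : f (xb + τ • v) - f xb ≤ (t + ε) ^ 2 / (2 * μ) * τ ^ 2 := by
        rw [show (t + ε) ^ 2 / (2 * μ) * τ ^ 2 = 1 / (2 * μ) * ((t + ε) * τ) ^ 2 by ring]
        exact h3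
      have h4 : (t / 2 - ε) * τ ^ 2 ≤ (t + ε) ^ 2 / (2 * μ) * τ ^ 2 := by
        generalize hFd : f (xb + τ • v) - f xb = Fd at h1 h3'
        linarith [h1, h3']
      exact le_of_mul_le_mul_right h4 hτ2
    rcases eq_or_lt_of_le ht0 with h0 | hpos
    · exact Or.inl h0.symm
    · right
      by_contra hlt
      push_neg at hlt
      set e := t * (μ - t) / (8 * μ) with hedef
      have hc : 0 < e := by
        apply div_pos (mul_pos hpos (by linarith)) (by linarith)
      have hBe := hB _ hc
      rw [le_div_iff₀ (by positivity : (0:ℝ) < 2 * μ)] at hBe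
      have he8 : 8 * μ * e = t * (μ - t) := by
        rw [hedef]; field_simp
      have heμ : 8 * μ * e ≤ μ ^ 2 := by nlinarith [sq_nonneg (μ - 2 * t)]
      have he2 : e < μ := by nlinarith
      have p1 : t * e < μ * e := mul_lt_mul_of_pos_right hlt hc
      have p2 : e * e < μ * e := mul_lt_mul_of_pos_right he2 hc
      have p3 : 0 < μ * e := mul_pos hμ hc
      nlinarith [hBe, he8, p1, p2, p3]
  -- core: near xb, a point whose gradient lies in ker H has zero gradient
  have hcore : ∃ ρ : ℝ, 0 < ρ ∧
      (∀ z ∈ ball xb ρ, f xb ≤ f z) ∧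
      (∀ z ∈ ball xb ρ, f z - f xb ≤ 1 / (2 * μ) * ‖G z‖ ^ 2) ∧
      (∀ x ∈ ball xb ρ, G x ∈ LinearMap.ker (H : EuclideanSpace ℝ (Fin n) →ₗ[ℝ] EuclideanSpace ℝ (Fin n)) → G x = 0) := by
    obtain ⟨r, hr, hHb, hgeb, hplb⟩ := hball (μ / 4) (by positivity)
    set c : ℝ := 1 + 2 * (‖H‖ + μ / 4) / μ with hc
    have hc1 : 1 ≤ c := by
      rw [hc]
      have : 0 ≤ 2 * (‖H‖ + μ / 4) / μ := by positivity
      linarith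
    have hc0 : 0 < c := lt_of_lt_of_le one_pos hc1
    set ρ := r / (2 * c) with hρdef
    have hρ0 : 0 < ρ := by positivity
    have hρr : ρ ≤ r / 2 := by
      rw [hρdef, div_le_div_iff₀ (by positivity) (by norm_num)]
      nlinarith
    have hsub : ball xb ρ ⊆ ball xb r :=
      ball_subset_ball (by linarith)
    refine ⟨ρ, hρ0, fun z hz => hgeb z (hsub hz), fun z hz => hplb z (hsub hz), ?_⟩
    intro x hx hker
    by_contra hg0
    set g := G x with hgdef
    set s := ‖g‖ with hsdef
    have hs0 : 0 < s := by
      rw [hsdef]; exact norm_pos_iff.mpr hg0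
    have hxball : x ∈ ball xb r := hsub hx
    have hxρ : ‖x - xb‖ < ρ := by rwa [mem_ball_iff_norm] at hx
    -- bound on ‖g‖
    have hT1 := grad_approx hf (convex_ball xb r) hHb (mem_ball_self hr) hxball
    rw [← hGdef, hGxb, sub_zero] at hT1
    have hgb : s ≤ (‖H‖ + μ / 4) * ρ := by
      have h1 : s ≤ ‖H (x - xb)‖ + μ / 4 * ‖x - xb‖ := by
        calc s = ‖(g - H (x - xb)) + H (x - xb)‖ := by rw [hsdef]; congr 1; abel
          _ ≤ ‖g - H (x - xb)‖ + ‖H (x - xb)‖ := norm_add_le _ _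
          _ ≤ μ / 4 * ‖x - xb‖ + ‖H (x - xb)‖ := by
              exact add_le_add_left hT1 _
          _ = ‖H (x - xb)‖ + μ / 4 * ‖x - xb‖ := by ring
      have h2 : ‖H (x - xb)‖ ≤ ‖H‖ * ‖x - xb‖ := H.le_opNorm _
      have h3 : ‖x - xb‖ ≤ ρ := le_of_lt hxρ
      have h4 : (0:ℝ) ≤ ‖H‖ + μ / 4 := by positivity
      nlinarith [norm_nonneg (x - xb), norm_nonneg (H (x - xb)), H.opNorm_nonneg]
    set t := s / (2 * (μ / 4)) with htdef
    have ht0 : 0 < t := by positivity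
    have hts : t = 2 * s / μ := by rw [htdef]; ring
    set u := s⁻¹ • g with hudef
    have hu1 : ‖u‖ = 1 := norm_smul_inv_norm hg0
    have hHg : H g = 0 := LinearMap.mem_ker.mp hker
    have hHu : H u = 0 := by rw [hudef, map_smul, hHg, smul_zero]
    set y := x - t • u with hydef
    have hyx : y - x = -(t • u) := by rw [hydef]; abel
    have hnyx : ‖y - x‖ = t := by
      rw [hyx, norm_neg, norm_smul, Real.norm_eq_abs, abs_of_pos ht0, hu1, mul_one]
    have hyball : y ∈ ball xb r := by
      rw [mem_ball_iff_norm]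
      have h1 : ‖y - xb‖ ≤ ‖y - x‖ + ‖x - xb‖ := norm_sub_le_norm_sub_add_norm_sub y x xb
      have h2 : t ≤ 2 * ((‖H‖ + μ / 4) * ρ) / μ := by
        rw [hts]
        gcongr
      have hcalc : ρ + 2 * ((‖H‖ + μ / 4) * ρ) / μ = ρ * c := by
        rw [hc]; ring
      have hcalc2 : ρ * c = r / 2 := by
        rw [hρdef]
        field_simp
      have := hnyx
      linarith [h1, h2, hxρ, hr]
    -- second order expansion at x in direction -u
    have hT2 := value_approx hf (convex_ball xb r) hHb hxball hyball
    rw [← hGdef, ← hgdef] at hT2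
    have hi1 : ⟪g, y - x⟫ = -(t * s) := by
      rw [hyx, inner_neg_right, real_inner_smul_right, hudef, real_inner_smul_right,
        real_inner_self_eq_norm_sq, ← hsdef]
      field_simp
    have hi2 : ⟪H (y - x), y - x⟫ = 0 := by
      rw [hyx, map_neg, map_smul, hHu, smul_zero, neg_zero, inner_zero_left]
    rw [hi1, hi2, hnyx] at hT2
    have hupper := le_of_abs_le hT2
    have hfy : f xb ≤ f y := hgeb y hyball
    have hfx : f x - f xb ≤ 1 / (2 * μ) * s ^ 2 := by
      have := hplb x hxball
      rwa [← hgdef, ← hsdef] at this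
    have hkey : t * s ≤ 1 / (2 * μ) * s ^ 2 + μ / 4 * t ^ 2 := by linarith
    have hμne : μ ≠ 0 := ne_of_gt hμ
    have hμt : μ * t = 2 * s := by rw [hts]; field_simp
    have hkey4 := mul_le_mul_of_nonneg_left hkey (by positivity : (0:ℝ) ≤ 4 * μ)
    have hRHS : 4 * μ * (1 / (2 * μ) * s ^ 2 + μ / 4 * t ^ 2) = 2 * s ^ 2 + μ ^ 2 * t ^ 2 := by
      field_simp; ring
    rw [hRHS] at hkey4
    have e1 : 4 * μ * (t * s) = 8 * s ^ 2 := by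
      rw [show 4 * μ * (t * s) = 4 * (μ * t) * s by ring, hμt]; ring
    have e2 : μ ^ 2 * t ^ 2 = 4 * s ^ 2 := by
      rw [show μ ^ 2 * t ^ 2 = (μ * t) ^ 2 by ring, hμt]; ring
    linarith [pow_pos hs0 2]
  obtain ⟨ρ, hρ0, hge', hpl', hcrit⟩ := hcore
  classical
  set K := LinearMap.ker (H : EuclideanSpace ℝ (Fin n) →ₗ[ℝ] EuclideanSpace ℝ (Fin n)) with hKdef
  set Kp := Kᗮ with hKpdef
  set d := Module.finrank ℝ ↥Kp with hddef
  set L := (stdOrthonormalBasis ℝ ↥Kp).repr with hLdef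
  set A : EuclideanSpace ℝ (Fin n) →L[ℝ] EuclideanSpace ℝ (Fin d) :=
    (L.toLinearIsometry.toContinuousLinearMap).comp (Submodule.orthogonalProjectionOnto Kp) with hAdef
  have hAapp : ∀ v : EuclideanSpace ℝ (Fin n), A v = L (Submodule.orthogonalProjectionOnto Kp v) := by
    intro v
    rw [hAdef]
    rfl
  have hA0 : ∀ v : EuclideanSpace ℝ (Fin n), A v = 0 ↔ v ∈ K := by
    intro v
    rw [hAapp]
    constructor
    · intro h
      have h1 : Submodule.orthogonalProjectionOnto Kp v = 0 := by
        have := L.map_eq_zero_iff.mp h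
        exact this
      have h2 : v ∈ Kpᗮ := Submodule.orthogonalProjectionOnto_eq_zero_iff.mp h1
      rwa [hKpdef, Submodule.orthogonal_orthogonal] at h2
    · intro h
      have h2 : v ∈ Kpᗮ := by
        rw [hKpdef, Submodule.orthogonal_orthogonal]
        exact h
      have h1 : Submodule.orthogonalProjectionOnto Kp v = 0 := Submodule.orthogonalProjectionOnto_eq_zero_iff.mpr h2
      rw [h1, map_zero]
  have hle : LinearMap.range (H : EuclideanSpace ℝ (Fin n) →ₗ[ℝ] EuclideanSpace ℝ (Fin n)) ≤ Kp := by
    rintro w ⟨v, rfl⟩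
    rw [hKpdef, Submodule.mem_orthogonal]
    intro u hu
    rw [ContinuousLinearMap.coe_coe, ← hsym u v]
    rw [hKdef, LinearMap.mem_ker, ContinuousLinearMap.coe_coe] at hu
    rw [hu, inner_zero_left]
  have hrange : ∀ w : EuclideanSpace ℝ (Fin n), w ∈ Kp → ∃ v, H v = w := by
    have hdim : Module.finrank ℝ (LinearMap.range (H : EuclideanSpace ℝ (Fin n) →ₗ[ℝ] EuclideanSpace ℝ (Fin n))) = Module.finrank ℝ ↥Kp := by
      have h1 := LinearMap.finrank_range_add_finrank_ker (H : EuclideanSpace ℝ (Fin n) →ₗ[ℝ]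
        EuclideanSpace ℝ (Fin n))
      have h2 := Submodule.finrank_add_finrank_orthogonal K
      have h3 : LinearMap.range (H : EuclideanSpace ℝ (Fin n) →ₗ[ℝ]
          EuclideanSpace ℝ (Fin n)) = LinearMap.range (H : EuclideanSpace ℝ (Fin n) →ₗ[ℝ]
            EuclideanSpace ℝ (Fin n)) := rfl
      have h4 : LinearMap.ker (H : EuclideanSpace ℝ (Fin n) →ₗ[ℝ]
          EuclideanSpace ℝ (Fin n)) = K := rfl
      rw [h3, h4] at h1
      rw [← hKpdef] at h2
      omega
    have heq : LinearMap.range (H : EuclideanSpace ℝ (Fin n) →ₗ[ℝ] EuclideanSpace ℝ (Fin n)) = Kp := Submodule.eq_of_le_of_finrank_eq hle hdim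
    intro w hw
    rw [← heq] at hw
    exact hw
  have hAHsurj : Function.Surjective (A.comp H) := by
    intro w
    obtain ⟨v, hv⟩ := hrange ((L.symm w : ↥Kp) : EuclideanSpace ℝ (Fin n)) (L.symm w).2
    refine ⟨v, ?_⟩
    rw [ContinuousLinearMap.comp_apply, hv, hAapp,
      Submodule.orthogonalProjectionOnto_mem_subspace_eq_self, LinearIsometryEquiv.apply_symm_apply]
  obtain ⟨Rl, hRl⟩ := LinearMap.exists_rightInverse_of_surjective
    ((A.comp H : EuclideanSpace ℝ (Fin n) →L[ℝ] EuclideanSpace ℝ (Fin d)) :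
      EuclideanSpace ℝ (Fin n) →ₗ[ℝ] EuclideanSpace ℝ (Fin d))
    (LinearMap.range_eq_top.mpr hAHsurj)
  set R := LinearMap.toContinuousLinearMap Rl with hRdef
  have hTR : ∀ y, A (H (R y)) = y := by
    intro y
    have := LinearMap.congr_fun hRl y
    simpa [hRdef] using this
  set δ := (1:ℝ) / (‖A‖ * ‖R‖ + 1) with hδdef
  have hδ0 : 0 < δ := by positivity
  set U := ball xb ρ ∩ {x | ‖fderiv ℝ G x - H‖ < δ} with hUdef
  have hUopen : IsOpen U :=
    isOpen_ball.inter (isOpen_lt ((hHessCont.sub continuous_const).norm) continuous_const)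
  have hxbU : xb ∈ U := by
    refine ⟨mem_ball_self hρ0, ?_⟩
    show ‖fderiv ℝ G xb - H‖ < δ
    rw [← hHdef, sub_self, norm_zero]
    exact hδ0
  have hfderivφ : ∀ x, fderiv ℝ (fun y => A (G y)) x = A.comp (fderiv ℝ G x) := fun x =>
    (A.hasFDerivAt.comp x (hGd x).hasFDerivAt).fderiv
  have hsurjU : ∀ x ∈ U, Function.Surjective (A.comp (fderiv ℝ G x)) := by
    intro x hx
    set D := fderiv ℝ G x with hDdef
    set sP := (A.comp (D - H)).comp R with hsPdef
    have hsnorm : ‖sP‖ < 1 := by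
      have h1 : ‖sP‖ ≤ ‖A.comp (D - H)‖ * ‖R‖ := ContinuousLinearMap.opNorm_comp_le _ _
      have h2 : ‖A.comp (D - H)‖ ≤ ‖A‖ * ‖D - H‖ := ContinuousLinearMap.opNorm_comp_le _ _
      have h3 : ‖D - H‖ < δ := hx.2
      have h4 : (‖A‖ * ‖R‖ + 1) * δ = 1 := by
        rw [hδdef]
        field_simp
      have h2' : ‖A.comp (D - H)‖ * ‖R‖ ≤ ‖A‖ * ‖D - H‖ * ‖R‖ :=
        mul_le_mul_of_nonneg_right h2 (norm_nonneg R)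
      have h5 : ‖A‖ * ‖D - H‖ * ‖R‖ ≤ ‖A‖ * δ * ‖R‖ := by
        gcongr
      have h6 : ‖A‖ * δ * ‖R‖ = (‖A‖ * ‖R‖) * δ := by ring
      have h7 : (‖A‖ * ‖R‖) * δ < (‖A‖ * ‖R‖ + 1) * δ := by nlinarith [hδ0]
      linarith
    have hneg : ‖-sP‖ < 1 := by rwa [norm_neg]
    set wU := Units.oneSub (-sP) hneg with hwUdef
    have hone : (A.comp H).comp R = 1 := by
      refine ContinuousLinearMap.ext fun y => ?_
      simpa using hTR y
    have hval : (A.comp D).comp R = wU.val := by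
      have hsplit : A.comp D = A.comp H + A.comp (D - H) := by
        rw [← ContinuousLinearMap.comp_add]
        congr 1
        abel
      rw [hsplit, ContinuousLinearMap.add_comp, hone, hwUdef, Units.val_oneSub,
        sub_neg_eq_add, hsPdef]
    intro y
    refine ⟨R ((wU⁻¹ : _ˣ).val y), ?_⟩
    have h8 : (A.comp D) (R ((wU⁻¹ : _ˣ).val y)) = ((A.comp D).comp R) ((wU⁻¹ : _ˣ).val y) :=
      rfl
    rw [h8, hval]
    calc wU.val ((wU⁻¹ : _ˣ).val y) = (wU.val * (wU⁻¹ : _ˣ).val) y := rfl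
      _ = y := by rw [Units.mul_inv]; rfl
  have hkerAH : LinearMap.ker ((A.comp H : EuclideanSpace ℝ (Fin n) →L[ℝ] EuclideanSpace ℝ (Fin d)) : EuclideanSpace ℝ (Fin n) →ₗ[ℝ] EuclideanSpace ℝ (Fin d)) = K := by
    ext v
    constructor
    · intro hv
      have h1 : A (H v) = 0 := LinearMap.mem_ker.mp hv
      have h2 : H v ∈ K := (hA0 (H v)).mp h1
      have h3 : H v ∈ Kp := hle ⟨v, rfl⟩
      have h4 : ⟪H v, H v⟫ = 0 := by
        rw [hKpdef, Submodule.mem_orthogonal] at h3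
        exact h3 (H v) h2
      have h5 : H v = 0 := inner_self_eq_zero.mp h4
      rw [hKdef]
      exact LinearMap.mem_ker.mpr h5
    · intro hv
      have h5 : H v = 0 := LinearMap.mem_ker.mp hv
      exact LinearMap.mem_ker.mpr (by rw [ContinuousLinearMap.coe_coe, ContinuousLinearMap.comp_apply, h5, map_zero])
  refine ⟨d, U, fun y => A (G y), hUopen, hxbU, ?_, ?_, ?_, ?_, ?_⟩
  · exact (A.contDiff.comp hGc).contDiffOn
  · intro x hx
    rw [hfderivφ x]
    exact hsurjU x hx
  · ext x
    simp only [Set.mem_inter_iff, Set.mem_setOf_eq, Set.mem_sep_iff]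
    constructor
    · rintro ⟨hxS, hxU⟩
      refine ⟨hxU, ?_⟩
      rw [hS] at hxS
      have h0 : G x = 0 := by
        rw [hGdef]
        unfold gradient
        rw [hxS.1.fderiv_eq_zero, map_zero]
      rw [h0, map_zero]
    · rintro ⟨hxU, hφ⟩
      refine ⟨?_, hxU⟩
      have hGK : G x ∈ K := (hA0 (G x)).mp hφ
      have h0 : G x = 0 := hcrit x hxU.1 hGK
      have h2 := hge' x hxU.1
      have h1 := hpl' x hxU.1
      rw [h0, norm_zero] at h1
      rw [show (1:ℝ) / (2 * μ) * 0 ^ 2 = 0 by ring] at h1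
      have hfeq : f x = f xb := le_antisymm (sub_nonpos.mp h1) h2
      rw [hS, Set.mem_setOf_eq]
      refine ⟨?_, hfeq⟩
      have hev : ∀ᶠ y in 𝓝 x, f x ≤ f y := by
        filter_upwards [isOpen_ball.mem_nhds hxU.1] with y hy
        rw [hfeq]
        exact hge' y hy
      exact hev
  · rw [hfderivφ xb, ← hHdef, hkerAH, hKdef]
  · intro v hv
    rw [hfderivφ xb, ← hHdef, hkerAH] at hv
    have hvK : v ∈ (LinearMap.ker (H : EuclideanSpace ℝ (Fin n) →ₗ[ℝ] EuclideanSpace ℝ (Fin n)))ᗮ := by rwa [hKdef] at hv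
    exact spec_bound hsym heig v hvK
end

section
/- The function f : ℝ → ℝ defined by f(x) = 2x² + x²·sin(1/√|x|) for x ≠ 0 and f(0) = 0 is C¹, satisfies quadratic growth around its global minimum x̄ = 0 (since f(x) ≥ x²), but has critical points with positive function value in every neighborhood of 0; in particular, f does not satisfy the PL inequality or the error bound around 0. -/
open Metric Filter Topology

noncomputable def fqg : ℝ → ℝ := fun x => 2 * x ^ 2 + x ^ 2 * Real.sin (1 / Real.sqrt |x|)

noncomputable def Dqg : ℝ → ℝ := fun x =>
  4 * x + 2 * x * Real.sin (1 / Real.sqrt |x|)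
    - Real.cos (1 / Real.sqrt |x|) * (x / (2 * Real.sqrt |x|))

lemma fqg_ge (x : ℝ) : x ^ 2 ≤ fqg x := by
  have h := Real.neg_one_le_sin (1 / Real.sqrt |x|)
  have := sq_nonneg x
  simp only [fqg]
  nlinarith

lemma hasDerivAt_fqg {x : ℝ} (hx : x ≠ 0) : HasDerivAt fqg (Dqg x) x := by
  have hq : 0 < Real.sqrt |x| := Real.sqrt_pos.2 (abs_pos.2 hx)
  have hq2 : Real.sqrt |x| ^ 2 = |x| := Real.sq_sqrt (abs_nonneg x)
  have habs : HasDerivAt (fun y : ℝ => |y|) ((SignType.sign x : ℝ)) x := hasDerivAt_abs hx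
  have hsqrt : HasDerivAt Real.sqrt (1 / (2 * Real.sqrt |x|)) |x| :=
    Real.hasDerivAt_sqrt (abs_ne_zero.2 hx)
  have hcomp : HasDerivAt (fun y : ℝ => Real.sqrt |y|)
      (1 / (2 * Real.sqrt |x|) * (SignType.sign x : ℝ)) x := hsqrt.comp x habs
  have hinv : HasDerivAt (fun y : ℝ => (Real.sqrt |y|)⁻¹)
      (-(1 / (2 * Real.sqrt |x|) * (SignType.sign x : ℝ)) / (Real.sqrt |x|) ^ 2) x :=
    hcomp.inv hq.ne'
  have hsin := hinv.sin
  have hx2 : HasDerivAt (fun y : ℝ => y ^ 2) (2 * x) x := by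
    simpa using hasDerivAt_pow 2 x
  have hfull := (hx2.const_mul 2).add (hx2.mul hsin)
  have hfeq : fqg = fun y : ℝ => 2 * y ^ 2 + y ^ 2 * Real.sin ((Real.sqrt |y|)⁻¹) := by
    funext y; simp [fqg, one_div]
  rw [hfeq]
  convert hfull using 1
  · exact rfl
  · exact rfl
  · exact rfl
  have hs : (SignType.sign x : ℝ) * x = |x| := by
    rcases hx.lt_or_gt with h | h
    · simp [sign_neg h, abs_of_neg h]
    · simp [sign_pos h, abs_of_pos h]
  have h1 : x ^ 2 * ((SignType.sign x : ℝ)) = x * |x| := by linear_combination x * hs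
  have key : x ^ 2 * (Real.cos (Real.sqrt |x|)⁻¹ *
      (-((2 * Real.sqrt |x|)⁻¹ * (SignType.sign x : ℝ)) / Real.sqrt |x| ^ 2))
      = -(Real.cos (Real.sqrt |x|)⁻¹ * (x / (2 * Real.sqrt |x|))) := by
    set c := Real.cos (Real.sqrt |x|)⁻¹ with hc
    rw [hq2]
    have habs : |x| ≠ 0 := abs_ne_zero.2 hx
    field_simp
    linear_combination (-c) * hs
  simp only [Dqg, one_div]
  rw [key]
  ring

lemma hasDerivAt_fqg0 : HasDerivAt fqg 0 0 := by
  rw [hasDerivAt_iff_tendsto_slope]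
  apply squeeze_zero_norm' (a := fun x : ℝ => 3 * |x|)
  · filter_upwards [self_mem_nhdsWithin] with x (hx : x ≠ 0)
    have hsin : |Real.sin (1 / Real.sqrt |x|)| ≤ 1 := Real.abs_sin_le_one _
    have : slope fqg 0 x = fqg x / x := by
      simp [slope_def_field, fqg]
    rw [Real.norm_eq_abs, this, abs_div]
    rw [div_le_iff₀ (abs_pos.2 hx)]
    have h1 : |fqg x| ≤ 3 * x ^ 2 := by
      simp only [fqg]
      have hx2 : |x ^ 2| = x ^ 2 := abs_of_nonneg (sq_nonneg x)
      calc |2 * x ^ 2 + x ^ 2 * Real.sin (1 / Real.sqrt |x|)|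
          ≤ |2 * x ^ 2| + |x ^ 2 * Real.sin (1 / Real.sqrt |x|)| := abs_add_le _ _
        _ ≤ 2 * x ^ 2 + x ^ 2 * 1 := by
            rw [abs_mul, abs_mul, abs_two, hx2]
            have := Real.abs_sin_le_one (1 / Real.sqrt |x|)
            nlinarith [sq_nonneg x]
        _ = 3 * x ^ 2 := by ring
    calc |fqg x| ≤ 3 * x ^ 2 := h1
      _ = 3 * |x| * |x| := by rw [mul_assoc, abs_mul_abs_self]; ring
  · have : Tendsto (fun x : ℝ => 3 * |x|) (𝓝 0) (𝓝 (3 * |(0:ℝ)|)) := by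
      exact (continuous_const.mul continuous_abs).tendsto 0
    simpa using this.mono_left nhdsWithin_le_nhds

lemma deriv_fqg : deriv fqg = Dqg := by
  funext x
  rcases eq_or_ne x 0 with rfl | hx
  · rw [hasDerivAt_fqg0.deriv]
    simp [Dqg]
  · exact (hasDerivAt_fqg hx).deriv

lemma continuous_Dqg : Continuous Dqg := by
  rw [continuous_iff_continuousAt]
  intro x
  rcases eq_or_ne x 0 with rfl | hx
  · have hD0 : Dqg 0 = 0 := by simp [Dqg]
    rw [ContinuousAt, hD0]
    apply squeeze_zero_norm (a := fun x : ℝ => 6 * |x| + Real.sqrt |x|)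
    · intro x
      rcases eq_or_ne x 0 with rfl | hx
      · simp [Dqg, Real.sqrt_nonneg]
      · have hq : 0 < Real.sqrt |x| := Real.sqrt_pos.2 (abs_pos.2 hx)
        have hq2 : Real.sqrt |x| ^ 2 = |x| := Real.sq_sqrt (abs_nonneg x)
        have h3 : |x / (2 * Real.sqrt |x|)| = Real.sqrt |x| / 2 := by
          rw [abs_div, abs_mul, abs_two, abs_of_pos hq]
          rw [eq_div_iff (by norm_num : (2:ℝ) ≠ 0)]
          field_simp
          nlinarith
        have b1 : |4 * x| = 4 * |x| := by rw [abs_mul]; norm_num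
        have b2 : |2 * x * Real.sin (1 / Real.sqrt |x|)| ≤ 2 * |x| := by
          rw [abs_mul, abs_mul, abs_two]
          have := Real.abs_sin_le_one (1 / Real.sqrt |x|)
          nlinarith [abs_nonneg x]
        have b3 : |Real.cos (1 / Real.sqrt |x|) * (x / (2 * Real.sqrt |x|))|
            ≤ Real.sqrt |x| / 2 := by
          rw [abs_mul, h3]
          have := Real.abs_cos_le_one (1 / Real.sqrt |x|)
          nlinarith [Real.sqrt_nonneg |x|]
        simp only [Dqg, Real.norm_eq_abs]
        calc |4 * x + 2 * x * Real.sin (1 / Real.sqrt |x|)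
              - Real.cos (1 / Real.sqrt |x|) * (x / (2 * Real.sqrt |x|))|
            ≤ |4 * x + 2 * x * Real.sin (1 / Real.sqrt |x|)|
              + |Real.cos (1 / Real.sqrt |x|) * (x / (2 * Real.sqrt |x|))| := abs_sub _ _
          _ ≤ (|4 * x| + |2 * x * Real.sin (1 / Real.sqrt |x|)|)
              + |Real.cos (1 / Real.sqrt |x|) * (x / (2 * Real.sqrt |x|))| := by
              gcongr; exact abs_add_le _ _
          _ ≤ 6 * |x| + Real.sqrt |x| := by
              rw [b1]
              nlinarith [b2, b3, Real.sqrt_nonneg |x|, abs_nonneg x]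
    · have : Continuous (fun x : ℝ => 6 * |x| + Real.sqrt |x|) := by
        continuity
      have h := this.tendsto 0
      simpa using h
  · have hq : Real.sqrt |x| ≠ 0 := (Real.sqrt_pos.2 (abs_pos.2 hx)).ne'
    have hsq : ContinuousAt (fun y : ℝ => Real.sqrt |y|) x :=
      Real.continuous_sqrt.comp continuous_abs |>.continuousAt
    have hu : ContinuousAt (fun y : ℝ => 1 / Real.sqrt |y|) x := by
      simp only [one_div]
      exact hsq.inv₀ hq
    exact (((continuousAt_const.mul continuousAt_id).add
      ((continuousAt_const.mul continuousAt_id).mul (Real.continuous_sin.continuousAt.comp hu))).sub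
      ((Real.continuous_cos.continuousAt.comp hu).mul
        (continuousAt_id.div (continuousAt_const.mul hsq) (by
          simpa using (mul_ne_zero two_ne_zero hq)))))

lemma contDiff_fqg : ContDiff ℝ 1 fqg := by
  rw [contDiff_one_iff_deriv]
  constructor
  · intro x
    rcases eq_or_ne x 0 with rfl | hx
    · exact hasDerivAt_fqg0.differentiableAt
    · exact (hasDerivAt_fqg hx).differentiableAt
  · rw [deriv_fqg]; exact continuous_Dqg

lemma Dqg_val {t : ℝ} (ht : 0 < t) :
    Dqg ((t ^ 2)⁻¹) = 4 / t ^ 2 + 2 / t ^ 2 * Real.sin t - Real.cos t / (2 * t) := by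
  simp only [Dqg]
  rw [abs_of_pos (by positivity : (0:ℝ) < (t ^ 2)⁻¹), Real.sqrt_inv, Real.sqrt_sq ht.le,
    one_div, inv_inv]
  field_simp

lemma crit_fqg : ∀ ε > (0 : ℝ), ∃ x : ℝ, x ≠ 0 ∧ |x| < ε ∧ Dqg x = 0 ∧ 0 < fqg x := by
  intro ε hε
  obtain ⟨n, hn⟩ := exists_nat_gt (max 2 (1 / ε))
  have hπ := Real.pi_gt_three
  have h2 : (2 : ℝ) < n := (le_max_left _ _).trans_lt hn
  have hεn : 1 / ε < n := (le_max_right _ _).trans_lt hn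
  have hn0 : (0 : ℝ) < n := by linarith
  set a := (n : ℝ) * (2 * Real.pi) with ha
  set b := (n : ℝ) * (2 * Real.pi) + Real.pi with hb
  have hapos : 0 < a := by rw [ha]; positivity
  have ha8 : 8 < a := by rw [ha]; nlinarith
  have hbpos : 0 < b := by rw [hb]; positivity
  have hab : a < b := by rw [ha, hb]; linarith
  have hsina : Real.sin a = 0 := by
    have h := Real.sin_nat_mul_pi (2 * n)
    push_cast at h
    rw [show a = 2 * (n : ℝ) * Real.pi by rw [ha]; ring]
    exact h
  have hcosa : Real.cos a = 1 := by rw [ha]; exact Real.cos_nat_mul_two_pi n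
  have hsinb : Real.sin b = 0 := by
    have h := Real.sin_nat_mul_pi (2 * n + 1)
    push_cast at h
    rw [show b = (2 * (n : ℝ) + 1) * Real.pi by rw [hb]; ring]
    exact h
  have hcosb : Real.cos b = -1 := by rw [hb]; exact Real.cos_nat_mul_two_pi_add_pi n
  have hD1 : Dqg ((a ^ 2)⁻¹) < 0 := by
    rw [Dqg_val hapos, hsina, hcosa]
    have heq : 4 / a ^ 2 + 2 / a ^ 2 * 0 - 1 / (2 * a) = (8 - a) / (2 * a ^ 2) := by
      field_simp; ring
    rw [heq]
    apply div_neg_of_neg_of_pos (by linarith) (by positivity)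
  have hD2 : 0 < Dqg ((b ^ 2)⁻¹) := by
    rw [Dqg_val hbpos, hsinb, hcosb]
    have heq : 4 / b ^ 2 + 2 / b ^ 2 * 0 - -1 / (2 * b) = 4 / b ^ 2 + 1 / (2 * b) := by
      ring
    rw [heq]; positivity
  have hle : (b ^ 2)⁻¹ ≤ (a ^ 2)⁻¹ := by
    apply inv_anti₀ (by positivity)
    nlinarith
  obtain ⟨c, hc, hDc⟩ := intermediate_value_Icc' hle continuous_Dqg.continuousOn
    ⟨hD1.le, hD2.le⟩
  have hcpos : 0 < c := lt_of_lt_of_le (by positivity) hc.1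
  have hna : (n : ℝ) < a ^ 2 := by nlinarith
  have hinvn : (a ^ 2)⁻¹ < (n : ℝ)⁻¹ := by
    apply inv_strictAnti₀ hn0 hna
  have hnε : ((n : ℝ))⁻¹ < ε := by
    rw [inv_eq_one_div, div_lt_iff₀ hn0]
    have h1 : 1 < (n : ℝ) * ε := by
      rw [div_lt_iff₀ hε] at hεn; nlinarith
    nlinarith
  refine ⟨c, hcpos.ne', ?_, hDc, lt_of_lt_of_le (pow_pos hcpos 2) (fqg_ge c)⟩
  rw [abs_of_pos hcpos]
  exact lt_of_le_of_lt hc.2 (hinvn.trans hnε)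

/-- The C¹ function `f(x) = 2x² + x²·sin(1/√|x|)` (with `f(0) = 0`, as given by the Lean
conventions `√0 = 0`, `1/0 = 0`, `sin 0 = 0`) satisfies quadratic growth at its global
minimum `0` (indeed `f(x) ≥ x²`), yet has critical points of positive value arbitrarily
close to `0`; hence it satisfies neither PL nor the error bound around `0`. -/
theorem qg_not_pl_counterexample :
    letI f : ℝ → ℝ := fun x => 2 * x ^ 2 + x ^ 2 * Real.sin (1 / Real.sqrt |x|)
    letI S : Set ℝ := {y | IsLocalMin f y ∧ f y = 0}
    ContDiff ℝ 1 f ∧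
    (∀ x : ℝ, x ^ 2 ≤ f x) ∧
    (∀ ε > (0 : ℝ), ∃ x : ℝ, x ≠ 0 ∧ |x| < ε ∧ deriv f x = 0 ∧ 0 < f x) ∧
    (¬ ∃ C : ℝ, ∀ᶠ x in 𝓝 (0 : ℝ), f x ≤ C * (deriv f x) ^ 2) ∧
    (¬ ∃ μ : ℝ, 0 < μ ∧ ∀ᶠ x in 𝓝 (0 : ℝ), μ * Metric.infDist x S ≤ |deriv f x|) := by
  show ContDiff ℝ 1 fqg ∧
    (∀ x : ℝ, x ^ 2 ≤ fqg x) ∧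
    (∀ ε > (0 : ℝ), ∃ x : ℝ, x ≠ 0 ∧ |x| < ε ∧ deriv fqg x = 0 ∧ 0 < fqg x) ∧
    (¬ ∃ C : ℝ, ∀ᶠ x in 𝓝 (0 : ℝ), fqg x ≤ C * (deriv fqg x) ^ 2) ∧
    (¬ ∃ μ : ℝ, 0 < μ ∧ ∀ᶠ x in 𝓝 (0 : ℝ),
      μ * Metric.infDist x {y | IsLocalMin fqg y ∧ fqg y = 0} ≤ |deriv fqg x|)
  have hS : {y : ℝ | IsLocalMin fqg y ∧ fqg y = 0} = {(0 : ℝ)} := by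
    ext y
    simp only [Set.mem_setOf_eq, Set.mem_singleton_iff]
    constructor
    · rintro ⟨-, h0⟩
      have h1 : y ^ 2 = 0 := le_antisymm (h0 ▸ fqg_ge y) (sq_nonneg y)
      exact pow_eq_zero_iff two_ne_zero |>.mp h1
    · rintro rfl
      have h0 : fqg 0 = 0 := by simp [fqg]
      refine ⟨Filter.Eventually.of_forall fun y => ?_, h0⟩
      rw [h0]
      exact le_trans (sq_nonneg y) (fqg_ge y)
  refine ⟨contDiff_fqg, fqg_ge, ?_, ?_, ?_⟩
  · intro ε hε
    obtain ⟨x, hx0, hxε, hD, hf⟩ := crit_fqg ε hε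
    exact ⟨x, hx0, hxε, by rw [deriv_fqg]; exact hD, hf⟩
  · rintro ⟨C, hC⟩
    rw [Metric.eventually_nhds_iff] at hC
    obtain ⟨δ, hδ, h⟩ := hC
    obtain ⟨x, hx0, hxδ, hD, hf⟩ := crit_fqg δ hδ
    have hx := h (show dist x 0 < δ by simpa [Real.dist_eq] using hxδ)
    rw [deriv_fqg, hD] at hx
    norm_num at hx
    linarith
  · rintro ⟨μ, hμ, hev⟩
    rw [Metric.eventually_nhds_iff] at hev
    obtain ⟨δ, hδ, h⟩ := hev
    obtain ⟨x, hx0, hxδ, hD, hf⟩ := crit_fqg δ hδ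
    have hx := h (show dist x 0 < δ by simpa [Real.dist_eq] using hxδ)
    rw [deriv_fqg, hD, hS, Metric.infDist_singleton, Real.dist_eq, sub_zero] at hx
    have : 0 < |x| := abs_pos.2 hx0
    simp only [abs_zero] at hx
    nlinarith
end

section
/- The function f : ℝ² → ℝ defined by f(x,y) = x²y²/(x²+y²) for (x,y) ≠ (0,0) and f(0,0) = 0 is C¹, satisfies a PL inequality around the origin, and its set of global minimizers {(x,y) : xy = 0} is the union of the two coordinate axes, which is not a C⁰ submanifold at the origin. -/
open Metric Filter Topology

noncomputable section CrossPL

local notation "E2" => EuclideanSpace ℝ (Fin 2)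



def ff : E2 → ℝ := fun p => (p 0) ^ 2 * (p 1) ^ 2 / ((p 0) ^ 2 + (p 1) ^ 2)

lemma norm_sq_eq (p : E2) : ‖p‖ ^ 2 = (p 0) ^ 2 + (p 1) ^ 2 := by
  rw [EuclideanSpace.norm_eq, Real.sq_sqrt (by positivity)]
  simp [Fin.sum_univ_two, sq_abs]

lemma hasFDerivAt_ff_ne (p : E2) (hp : (p 0) ^ 2 + (p 1) ^ 2 ≠ 0) :
    ∃ D : E2 →L[ℝ] ℝ, HasFDerivAt ff D p ∧ ∀ v : E2,
      D v = 2 * p 0 * (p 1) ^ 4 / ((p 0) ^ 2 + (p 1) ^ 2) ^ 2 * v 0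
        + 2 * (p 0) ^ 4 * p 1 / ((p 0) ^ 2 + (p 1) ^ 2) ^ 2 * v 1 := by
  have A := (EuclideanSpace.proj (𝕜 := ℝ) (0 : Fin 2)).hasFDerivAt (x := p)
  have B := (EuclideanSpace.proj (𝕜 := ℝ) (1 : Fin 2)).hasFDerivAt (x := p)
  have hden := (A.mul A).add (B.mul B)
  have hp' : (EuclideanSpace.proj (𝕜 := ℝ) (0 : Fin 2)) p * (EuclideanSpace.proj (𝕜 := ℝ) (0 : Fin 2)) p
      + (EuclideanSpace.proj (𝕜 := ℝ) (1 : Fin 2)) p * (EuclideanSpace.proj (𝕜 := ℝ) (1 : Fin 2)) p ≠ 0 := by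
    simpa [PiLp.proj_apply, ← pow_two] using hp
  have hinv := (hasDerivAt_inv hp').comp_hasFDerivAt p hden
  have hff := ((A.mul A).mul (B.mul B)).mul hinv
  refine ⟨_, hff.congr_of_eventuallyEq (Eventually.of_forall fun q => by
      simp [ff, div_eq_mul_inv, PiLp.proj_apply, Function.comp]
      ring), fun v => ?_⟩
  have h4 : (p 0 : ℝ) * p 0 + (p 1 : ℝ) * p 1 ≠ 0 := by
    simpa [PiLp.proj_apply] using hp'
  simp only [ContinuousLinearMap.add_apply, ContinuousLinearMap.coe_smul', Pi.smul_apply,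
    PiLp.proj_apply, ContinuousLinearMap.smul_apply, smul_eq_mul, Function.comp_apply,
    ContinuousLinearMap.neg_apply, neg_smul, ContinuousLinearMap.coe_add', Pi.add_apply, Pi.mul_apply]
  field_simp [h4]
  ring





lemma ff_nonneg (p : E2) : 0 ≤ ff p := by
  apply div_nonneg <;> positivity

lemma ff_zero : ff (0 : E2) = 0 := by simp [ff]

lemma eq_zero_of_coords (p : E2) (h0 : p 0 = 0) (h1 : p 1 = 0) : p = 0 := by
  ext i
  fin_cases i <;> simpa

lemma ff_le (p : E2) : ff p ≤ ‖p‖ ^ 2 / 4 := by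
  rw [norm_sq_eq]
  rcases eq_or_ne ((p 0) ^ 2 + (p 1) ^ 2) 0 with h | h
  · rw [ff, h, div_zero]
    positivity
  · have hh : 0 < (p 0) ^ 2 + (p 1) ^ 2 := lt_of_le_of_ne (by positivity) (Ne.symm h)
    rw [ff, div_le_div_iff₀ hh (by norm_num)]
    nlinarith [sq_nonneg ((p 0) ^ 2 - (p 1) ^ 2)]

lemma hasFDerivAt_ff_zero : HasFDerivAt ff (0 : E2 →L[ℝ] ℝ) 0 := by
  rw [hasFDerivAt_iff_isLittleO_nhds_zero]
  rw [Asymptotics.isLittleO_iff]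
  intro c hc
  filter_upwards [Metric.closedBall_mem_nhds (0 : E2) (show (0:ℝ) < 4 * c by positivity)]
    with p hp
  rw [mem_closedBall_zero_iff] at hp
  have h1 : ff p ≤ ‖p‖ ^ 2 / 4 := ff_le p
  have h2 : 0 ≤ ff p := ff_nonneg p
  have h3 : (0:ℝ) ≤ ‖p‖ := norm_nonneg p
  simp only [zero_add, ff_zero, ContinuousLinearMap.zero_apply, sub_zero]
  rw [Real.norm_eq_abs, abs_of_nonneg h2]
  calc ff p ≤ ‖p‖ ^ 2 / 4 := h1
    _ ≤ c * ‖p‖ := by nlinarith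





lemma coord_abs_le (p : E2) (i : Fin 2) : |p i| ≤ ‖p‖ := by
  have h := norm_sq_eq p
  have hi : i = 0 ∨ i = 1 := by
    fin_cases i
    · exact Or.inl rfl
    · exact Or.inr rfl
  have h2 : (p i) ^ 2 ≤ ‖p‖ ^ 2 := by
    rcases hi with rfl | rfl <;> (rw [h]; nlinarith [sq_nonneg (p 0), sq_nonneg (p 1)])
  have := abs_nonneg (p i)
  nlinarith [sq_abs (p i), norm_nonneg p]

lemma den_eq_zero {p : E2} (h : (p 0) ^ 2 + (p 1) ^ 2 = 0) : p = 0 := by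
  have h0 : p 0 = 0 := by nlinarith [sq_nonneg (p 0), sq_nonneg (p 1)]
  have h1 : p 1 = 0 := by nlinarith [sq_nonneg (p 0), sq_nonneg (p 1)]
  exact eq_zero_of_coords p h0 h1

lemma differentiable_ff : Differentiable ℝ ff := by
  intro p
  rcases eq_or_ne ((p 0) ^ 2 + (p 1) ^ 2) 0 with h | h
  · rw [den_eq_zero h]
    exact hasFDerivAt_ff_zero.differentiableAt
  · exact (hasFDerivAt_ff_ne p h).choose_spec.1.differentiableAt

lemma fderiv_ff_norm_le (p : E2) : ‖fderiv ℝ ff p‖ ≤ 4 * ‖p‖ := by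
  rcases eq_or_ne ((p 0) ^ 2 + (p 1) ^ 2) 0 with h | h
  · rw [den_eq_zero h, hasFDerivAt_ff_zero.fderiv]
    simp [norm_nonneg]
  · obtain ⟨D, hD, hDv⟩ := hasFDerivAt_ff_ne p h
    rw [hD.fderiv]
    apply ContinuousLinearMap.opNorm_le_bound _ (by positivity)
    intro v
    rw [hDv v]
    have hh : 0 < (p 0) ^ 2 + (p 1) ^ 2 := lt_of_le_of_ne (by positivity) (Ne.symm h)
    have hx := coord_abs_le p 0
    have hy := coord_abs_le p 1
    have hv0 := coord_abs_le v 0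
    have hv1 := coord_abs_le v 1
    have hxx := abs_le.mp hx
    have hyy := abs_le.mp hy
    have hv00 := abs_le.mp hv0
    have hv11 := abs_le.mp hv1
    have h4y : (p 1) ^ 4 ≤ ((p 0) ^ 2 + (p 1) ^ 2) ^ 2 := by
      nlinarith [sq_nonneg ((p 0) ^ 2), mul_nonneg (sq_nonneg (p 0)) (sq_nonneg (p 1))]
    have h4x : (p 0) ^ 4 ≤ ((p 0) ^ 2 + (p 1) ^ 2) ^ 2 := by
      nlinarith [sq_nonneg ((p 1) ^ 2), mul_nonneg (sq_nonneg (p 0)) (sq_nonneg (p 1))]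
    have hA : |2 * p 0 * (p 1) ^ 4 / ((p 0) ^ 2 + (p 1) ^ 2) ^ 2| ≤ 2 * ‖p‖ := by
      rw [abs_div, abs_of_pos (pow_pos hh 2), div_le_iff₀ (pow_pos hh 2)]
      rw [abs_le]
      constructor <;>
        nlinarith [mul_nonneg (show (0:ℝ) ≤ p 0 + ‖p‖ by linarith [hxx.1]) (show (0:ℝ) ≤ (p 1)^4 by positivity),
          mul_nonneg (show (0:ℝ) ≤ ‖p‖ - p 0 by linarith [hxx.2]) (show (0:ℝ) ≤ (p 1)^4 by positivity),
          mul_nonneg (norm_nonneg p) (show (0:ℝ) ≤ ((p 0)^2+(p 1)^2)^2 - (p 1)^4 by linarith)]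
    have hB : |2 * (p 0) ^ 4 * p 1 / ((p 0) ^ 2 + (p 1) ^ 2) ^ 2| ≤ 2 * ‖p‖ := by
      rw [abs_div, abs_of_pos (pow_pos hh 2), div_le_iff₀ (pow_pos hh 2)]
      rw [abs_le]
      constructor <;>
        nlinarith [mul_nonneg (show (0:ℝ) ≤ p 1 + ‖p‖ by linarith [hyy.1]) (show (0:ℝ) ≤ (p 0)^4 by positivity),
          mul_nonneg (show (0:ℝ) ≤ ‖p‖ - p 1 by linarith [hyy.2]) (show (0:ℝ) ≤ (p 0)^4 by positivity),
          mul_nonneg (norm_nonneg p) (show (0:ℝ) ≤ ((p 0)^2+(p 1)^2)^2 - (p 0)^4 by linarith)]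
    rw [Real.norm_eq_abs]
    calc |2 * p 0 * (p 1) ^ 4 / ((p 0) ^ 2 + (p 1) ^ 2) ^ 2 * v 0
          + 2 * (p 0) ^ 4 * p 1 / ((p 0) ^ 2 + (p 1) ^ 2) ^ 2 * v 1|
        ≤ |2 * p 0 * (p 1) ^ 4 / ((p 0) ^ 2 + (p 1) ^ 2) ^ 2 * v 0|
          + |2 * (p 0) ^ 4 * p 1 / ((p 0) ^ 2 + (p 1) ^ 2) ^ 2 * v 1| := abs_add_le _ _
      _ = |2 * p 0 * (p 1) ^ 4 / ((p 0) ^ 2 + (p 1) ^ 2) ^ 2| * |v 0|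
          + |2 * (p 0) ^ 4 * p 1 / ((p 0) ^ 2 + (p 1) ^ 2) ^ 2| * |v 1| := by
          rw [abs_mul, abs_mul]
      _ ≤ 2 * ‖p‖ * ‖v‖ + 2 * ‖p‖ * ‖v‖ := by
          gcongr <;> first
          | exact hA | exact hv0 | exact hB | exact hv1 | exact abs_nonneg _
      _ = 4 * ‖p‖ * ‖v‖ := by ring

lemma isOpen_UU : IsOpen {q : E2 | (q 0) ^ 2 + (q 1) ^ 2 ≠ 0} := by
  have hc : Continuous fun q : E2 => (q 0) ^ 2 + (q 1) ^ 2 := by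
    apply Continuous.add <;> exact ((continuous_apply _).comp (PiLp.continuous_ofLp 2 _)).pow 2
  exact isOpen_ne.preimage hc

lemma contDiffOn_ff : ContDiffOn ℝ 1 ff {q : E2 | (q 0) ^ 2 + (q 1) ^ 2 ≠ 0} := by
  apply ContDiffOn.div
  · apply ContDiff.contDiffOn
    exact (((EuclideanSpace.proj (𝕜 := ℝ) (0 : Fin 2)).contDiff).pow 2).mul
      (((EuclideanSpace.proj (𝕜 := ℝ) (1 : Fin 2)).contDiff).pow 2)
  · apply ContDiff.contDiffOn
    exact (((EuclideanSpace.proj (𝕜 := ℝ) (0 : Fin 2)).contDiff).pow 2).add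
      (((EuclideanSpace.proj (𝕜 := ℝ) (1 : Fin 2)).contDiff).pow 2)
  · exact fun q hq => hq

lemma continuous_fderiv_ff : Continuous (fderiv ℝ ff) := by
  rw [continuous_iff_continuousAt]
  intro p
  rcases eq_or_ne ((p 0) ^ 2 + (p 1) ^ 2) 0 with h | h
  · rw [den_eq_zero h]
    have hlim : Tendsto (fun q : E2 => (4:ℝ) * ‖q‖) (𝓝 0) (𝓝 0) := by
      have := (continuous_norm.tendsto (0 : E2)).const_mul (4:ℝ)
      simpa using this
    have : Tendsto (fderiv ℝ ff) (𝓝 0) (𝓝 0) :=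
      squeeze_zero_norm fderiv_ff_norm_le hlim
    rw [ContinuousAt, hasFDerivAt_ff_zero.fderiv]
    exact this
  · exact (contDiffOn_ff.continuousOn_fderiv_of_isOpen isOpen_UU le_rfl).continuousAt
      (isOpen_UU.mem_nhds h)

lemma contDiff_ff : ContDiff ℝ 1 ff :=
  contDiff_one_iff_fderiv.2 ⟨differentiable_ff, continuous_fderiv_ff⟩





lemma gradient_coord (p : E2) (hp : (p 0) ^ 2 + (p 1) ^ 2 ≠ 0) :
    gradient ff p 0 = 2 * p 0 * (p 1) ^ 4 / ((p 0) ^ 2 + (p 1) ^ 2) ^ 2 ∧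
    gradient ff p 1 = 2 * (p 0) ^ 4 * p 1 / ((p 0) ^ 2 + (p 1) ^ 2) ^ 2 := by
  obtain ⟨D, hD, hDv⟩ := hasFDerivAt_ff_ne p hp
  have hgrad : gradient ff p = (InnerProductSpace.toDual ℝ E2).symm D :=
    hD.hasGradientAt.gradient
  constructor
  · have h1 : (gradient ff p) 0
        = @inner ℝ _ _ (gradient ff p) (EuclideanSpace.single 0 (1:ℝ)) := by
      rw [EuclideanSpace.inner_single_right]
      simp
    rw [h1, hgrad, InnerProductSpace.toDual_symm_apply, hDv]
    simp [EuclideanSpace.single_apply]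
  · have h1 : (gradient ff p) 1
        = @inner ℝ _ _ (gradient ff p) (EuclideanSpace.single 1 (1:ℝ)) := by
      rw [EuclideanSpace.inner_single_right]
      simp
    rw [h1, hgrad, InnerProductSpace.toDual_symm_apply, hDv]
    simp [EuclideanSpace.single_apply]

lemma pl_ineq (p : E2) : ff p ≤ 1 / (2 * (1/2 : ℝ)) * ‖gradient ff p‖ ^ 2 := by
  rcases eq_or_ne ((p 0) ^ 2 + (p 1) ^ 2) 0 with h | h
  · rw [den_eq_zero h, ff_zero]
    positivity
  · obtain ⟨h0, h1⟩ := gradient_coord p h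
    have hh : 0 < (p 0) ^ 2 + (p 1) ^ 2 := lt_of_le_of_ne (by positivity) (Ne.symm h)
    have hns := norm_sq_eq (gradient ff p)
    rw [hns, h0, h1]
    have : (1:ℝ) / (2 * (1/2)) = 1 := by norm_num
    rw [this, one_mul, ff]
    rw [div_pow, div_pow, ← add_div, div_le_div_iff₀ hh (by positivity)]
    nlinarith [sq_nonneg (p 0 * p 1 * ((p 0)^2 + (p 1)^2) * ((p 0)^2 - (p 1)^2)),
      sq_nonneg (p 0 * p 1), sq_nonneg ((p 0)^2 - (p 1)^2), sq_nonneg ((p 0)^2 + (p 1)^2)]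

lemma ff_min_iff (p : E2) : (∀ q, ff p ≤ ff q) ↔ (p 0 = 0 ∨ p 1 = 0) := by
  constructor
  · intro hp
    have h0 : ff p ≤ 0 := by simpa [ff_zero] using hp 0
    have h1 : ff p = 0 := le_antisymm h0 (ff_nonneg p)
    rcases eq_or_ne ((p 0) ^ 2 + (p 1) ^ 2) 0 with h | h
    · left
      nlinarith [sq_nonneg (p 0), sq_nonneg (p 1)]
    · rw [ff, div_eq_zero_iff] at h1
      rcases h1 with h1 | h1
      · rcases mul_eq_zero.mp h1 with h2 | h2
        · exact Or.inl (by nlinarith)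
        · exact Or.inr (by nlinarith)
      · exact absurd h1 h
  · intro hp q
    have : ff p = 0 := by
      rcases hp with h | h <;> simp [ff, h]
    rw [this]
    exact ff_nonneg q


lemma isPathConnected_ball_diff_singleton
    {E : Type*} [NormedAddCommGroup E] [NormedSpace ℝ E]
    (hrank : 1 < Module.rank ℝ E) (z : E) {r : ℝ} (hr : 0 < r) :
    IsPathConnected (Metric.ball z r \ {z}) := by
  have hnt : Nontrivial E := by
    rcases rank_pos_iff_nontrivial.mp (lt_trans zero_lt_one hrank) with h
    exact h
  obtain ⟨u, hu⟩ := exists_ne (0 : E)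
  set p₀ : E := z + (r / 2 / ‖u‖) • u with hp₀
  have hu' : ‖u‖ ≠ 0 := norm_ne_zero_iff.mpr hu
  have hp₀z : ‖p₀ - z‖ = r / 2 := by
    rw [hp₀]
    simp only [add_sub_cancel_left, norm_smul, Real.norm_eq_abs]
    rw [abs_of_pos (by positivity)]
    field_simp
  have hp₀mem : p₀ ∈ Metric.ball z r \ {z} := by
    constructor
    · rw [Metric.mem_ball, dist_eq_norm, hp₀z]
      linarith
    · simp only [Set.mem_singleton_iff]
      intro hcon
      rw [hcon, sub_self] at hp₀z
      simp at hp₀z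
      linarith
  refine ⟨p₀, hp₀mem, ?_⟩
  intro q hq
  obtain ⟨hqball, hqne⟩ := hq
  have hqz : q ≠ z := by simpa using hqne
  set s : ℝ := ‖q - z‖ with hs
  have hs0 : 0 < s := by
    rw [hs]
    exact norm_pos_iff.mpr (sub_ne_zero.mpr hqz)
  have hsr : s < r := by
    rw [hs, ← dist_eq_norm]
    exact Metric.mem_ball.mp hqball
  have hsphere_sub : Metric.sphere z s ⊆ Metric.ball z r \ {z} := by
    intro w hw
    rw [Metric.mem_sphere] at hw
    constructor
    · rw [Metric.mem_ball, hw]; exact hsr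
    · simp only [Set.mem_singleton_iff]
      intro hcon
      rw [hcon] at hw
      simp at hw
      linarith
  have hsp : IsPathConnected (Metric.sphere z s) :=
    isPathConnected_sphere hrank z hs0.le
  -- radial point w on sphere z s in direction p₀ - z
  set c : ℝ := s / (r / 2) with hc
  have hc0 : 0 < c := by positivity
  have hc2 : c < 2 := by
    rw [hc]
    rw [div_lt_iff₀ (by linarith)]
    linarith
  set w : E := z + c • (p₀ - z) with hw
  have hwz : ‖w - z‖ = s := by
    rw [hw]
    simp only [add_sub_cancel_left, norm_smul, Real.norm_eq_abs, abs_of_pos hc0, hp₀z]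
    rw [hc]
    field_simp
  have hwmem : w ∈ Metric.sphere z s := by
    rw [Metric.mem_sphere, dist_eq_norm, hwz]
  -- the segment from p₀ to w stays in the punctured ball
  have hseg : segment ℝ p₀ w ⊆ Metric.ball z r \ {z} := by
    intro x hx
    obtain ⟨α, β, hα, hβ, hαβ, hxe⟩ := hx
    have hxz : x - z = (α + β * c) • (p₀ - z) := by
      rw [← hxe, hw]
      have : α • p₀ + β • (z + c • (p₀ - z)) - z
          = α • (p₀ - z) + (β * c) • (p₀ - z) + (α + β) • z - z := by
        rw [mul_smul]
        module
      rw [this, hαβ, one_smul, add_sub_cancel_right, ← add_smul]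
    have hcoef_lo : min 1 c ≤ α + β * c := by
      rcases le_total 1 c with h | h
      · have : min 1 c = 1 := min_eq_left h
        rw [this]
        nlinarith
      · have : min 1 c = c := min_eq_right h
        rw [this]
        nlinarith
    have hcoef_pos : 0 < α + β * c := lt_of_lt_of_le (lt_min one_pos hc0) hcoef_lo
    have hcoef_hi : α + β * c < 2 := by
      rcases le_total 1 c with h | h
      · nlinarith
      · nlinarith
    have hxznorm : ‖x - z‖ = (α + β * c) * (r / 2) := by
      rw [hxz, norm_smul, Real.norm_eq_abs, abs_of_pos hcoef_pos, hp₀z]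
    constructor
    · rw [Metric.mem_ball, dist_eq_norm, hxznorm]
      nlinarith
    · simp only [Set.mem_singleton_iff]
      intro hcon
      rw [hcon, sub_self] at hxznorm
      have : (α + β * c) * (r / 2) > 0 := by positivity
      rw [← hxznorm] at this
      simp at this
  have J1 : JoinedIn (Metric.ball z r \ {z}) p₀ w := by
    have hconv : Convex ℝ (segment ℝ p₀ w) := convex_segment _ _
    have : IsPathConnected (segment ℝ p₀ w) :=
      hconv.isPathConnected ⟨p₀, left_mem_segment _ _ _⟩
    exact (this.joinedIn p₀ (left_mem_segment _ _ _) w (right_mem_segment _ _ _)).mono hseg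
  have hqs : q ∈ Metric.sphere z s := by
    rw [Metric.mem_sphere, dist_eq_norm]
  have J2 : JoinedIn (Metric.ball z r \ {z}) w q :=
    (hsp.joinedIn w hwmem q hqs).mono hsphere_sub
  exact J1.trans J2


lemma preconnected_in_three {X : Type*} [TopologicalSpace X] {C O1 O2 O3 : Set X}
    (hC : IsPreconnected C) (h1 : IsOpen O1) (h2 : IsOpen O2) (h3 : IsOpen O3)
    (d12 : Disjoint O1 O2) (d13 : Disjoint O1 O3) (d23 : Disjoint O2 O3)
    (hsub : C ⊆ O1 ∪ O2 ∪ O3) : C ⊆ O1 ∨ C ⊆ O2 ∨ C ⊆ O3 := by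
  have hsub' : C ⊆ O1 ∪ (O2 ∪ O3) := by rwa [← Set.union_assoc]
  by_cases hc1 : (C ∩ O1).Nonempty
  · exact Or.inl (hC.subset_left_of_subset_union h1 (h2.union h3)
      (Set.disjoint_union_right.mpr ⟨d12, d13⟩) hsub' hc1)
  · have hsub2 : C ⊆ O2 ∪ O3 := by
      intro x hx
      rcases hsub hx with (h | h) | h
      · exact absurd ⟨x, hx, h⟩ hc1
      · exact Or.inl h
      · exact Or.inr h
    by_cases hc2 : (C ∩ O2).Nonempty
    · exact Or.inr (Or.inl (hC.subset_left_of_subset_union h2 h3 d23 hsub2 hc2))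
    · refine Or.inr (Or.inr fun x hx => ?_)
      rcases hsub2 hx with h | h
      · exact absurd ⟨x, hx, h⟩ hc2
      · exact h




lemma not_manifold :
    ¬ ∃ (d : ℕ) (U : Set E2) (V : Set (EuclideanSpace ℝ (Fin d))),
        IsOpen U ∧ (0 : E2) ∈ U ∧ IsOpen V ∧
        Nonempty (↥({p : E2 | p 0 = 0 ∨ p 1 = 0} ∩ U) ≃ₜ ↥V) := by
  rintro ⟨d, U, V, hU, h0U, hV, ⟨e⟩⟩
  set A : Set E2 := {p : E2 | p 0 = 0 ∨ p 1 = 0} ∩ U with hA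
  have h0A : (0 : E2) ∈ A := ⟨Or.inl rfl, h0U⟩
  -- a small ball around 0 inside U, giving witness points on the axes
  -- d = 0 : contradiction by cardinality
  rcases Nat.eq_zero_or_pos d with rfl | hd
  · obtain ⟨ε, hε, hεU⟩ := Metric.isOpen_iff.mp hU 0 h0U
    have hq1ball : EuclideanSpace.single (0 : Fin 2) (ε/2) ∈ Metric.ball (0:E2) ε := by
      rw [Metric.mem_ball, dist_zero_right, EuclideanSpace.norm_single]
      rw [Real.norm_eq_abs, abs_of_pos (by positivity)]
      linarith
    have hq1A : EuclideanSpace.single (0 : Fin 2) (ε/2) ∈ A := by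
      refine ⟨Or.inr ?_, hεU hq1ball⟩
      simp [EuclideanSpace.single_apply]
    have hne : (⟨0, h0A⟩ : A) ≠ ⟨_, hq1A⟩ := by
      intro hcon
      have := congrArg Subtype.val hcon
      have h2 := congrArg (fun p : E2 => p 0) this
      simp [EuclideanSpace.single_apply] at h2
      linarith
    have : Subsingleton (EuclideanSpace ℝ (Fin 0)) := inferInstance
    exact hne (e.injective (Subtype.val_injective (Subsingleton.elim _ _)))
  -- d ≥ 1
  · set E' := EuclideanSpace ℝ (Fin d) with hE'
    let ι : A → E' := fun t => (e t : E')
    have hι_cont : Continuous ι := continuous_subtype_val.comp e.continuous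
    have hι_inj : Function.Injective ι :=
      Subtype.val_injective.comp e.injective
    have hι_open : IsOpenMap ι := hV.isOpenMap_subtype_val.comp e.isOpenMap
    set o : A := ⟨0, h0A⟩ with ho
    set z : E' := ι o with hz
    obtain ⟨r, hr, hball⟩ := Metric.isOpen_iff.mp hι_open.isOpen_range z ⟨o, rfl⟩
    set W : Set A := ι ⁻¹' Metric.ball z r with hW
    have hWopen : IsOpen W := Metric.isOpen_ball.preimage hι_cont
    have hoW : o ∈ W := by
      simp only [hW, Set.mem_preimage, Metric.mem_ball, ← hz, dist_self]
      exact hr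
    obtain ⟨Ω, hΩopen, hΩ⟩ := isOpen_induced_iff.mp hWopen
    have h0Ω : (0 : E2) ∈ Ω := by
      have : o ∈ Subtype.val ⁻¹' Ω := hΩ ▸ hoW
      exact this
    obtain ⟨δ, hδ, hδsub⟩ := Metric.isOpen_iff.mp (hΩopen.inter hU) 0 ⟨h0Ω, h0U⟩
    -- witness points
    have hballmem : ∀ (i : Fin 2) (a : ℝ), a ≠ 0 → |a| < δ →
        ∃ t : A, t ∈ W ∧ (t : E2) = EuclideanSpace.single i a := by
      intro i a ha haδ
      have hmem : EuclideanSpace.single i a ∈ Metric.ball (0:E2) δ := by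
        rw [Metric.mem_ball, dist_zero_right, EuclideanSpace.norm_single, Real.norm_eq_abs]
        exact haδ
      have hΩU := hδsub hmem
      have haxes : EuclideanSpace.single i a ∈ {p : E2 | p 0 = 0 ∨ p 1 = 0} := by
        fin_cases i
        · exact Or.inr (by simp [EuclideanSpace.single_apply])
        · exact Or.inl (by simp [EuclideanSpace.single_apply])
      refine ⟨⟨_, haxes, hΩU.2⟩, ?_, rfl⟩
      have : (⟨_, haxes, hΩU.2⟩ : A) ∈ Subtype.val ⁻¹' Ω := hΩU.1
      exact hΩ ▸ this
    obtain ⟨t1, ht1W, ht1⟩ := hballmem 0 (δ/2) (by positivity)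
      (by rw [abs_of_pos (by positivity)]; linarith)
    obtain ⟨t2, ht2W, ht2⟩ := hballmem 0 (-(δ/2)) (by simp; positivity)
      (by rw [abs_of_neg (by simp; positivity)]; linarith)
    obtain ⟨t3, ht3W, ht3⟩ := hballmem 1 (δ/2) (by positivity)
      (by rw [abs_of_pos (by positivity)]; linarith)
    -- branch sets
    have hcoord : ∀ i : Fin 2, Continuous fun t : A => (t : E2) i := fun i =>
      (continuous_apply i).comp ((PiLp.continuous_ofLp 2 _).comp continuous_subtype_val)
    set O1 : Set A := W ∩ {t : A | (0:ℝ) < (t : E2) 0} with hO1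
    set O2 : Set A := W ∩ {t : A | (t : E2) 0 < 0} with hO2
    set O3 : Set A := W ∩ {t : A | (t : E2) 1 ≠ 0} with hO3
    have hOpen1 : IsOpen O1 := hWopen.inter (isOpen_lt continuous_const (hcoord 0))
    have hOpen2 : IsOpen O2 := hWopen.inter (isOpen_lt (hcoord 0) continuous_const)
    have hOpen3 : IsOpen O3 := hWopen.inter (isOpen_ne_fun (hcoord 1) continuous_const)
    have ht1O1 : t1 ∈ O1 := by
      refine ⟨ht1W, ?_⟩
      show (0:ℝ) < (t1 : E2) 0
      rw [ht1, EuclideanSpace.single_apply]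
      norm_num
      positivity
    have ht2O2 : t2 ∈ O2 := by
      refine ⟨ht2W, ?_⟩
      show (t2 : E2) 0 < 0
      rw [ht2, EuclideanSpace.single_apply]
      norm_num
      positivity
    have ht3O3 : t3 ∈ O3 := by
      refine ⟨ht3W, ?_⟩
      show (t3 : E2) 1 ≠ 0
      rw [ht3, EuclideanSpace.single_apply]
      norm_num
      positivity
    have hd12 : Disjoint O1 O2 := by
      rw [Set.disjoint_left]
      rintro t ⟨_, h1⟩ ⟨_, h2⟩
      simp only [Set.mem_setOf_eq] at h1 h2
      exact absurd (lt_trans h1 h2) (lt_irrefl _)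
    have hd13 : Disjoint O1 O3 := by
      rw [Set.disjoint_left]
      rintro t ⟨_, h1⟩ ⟨_, h2⟩
      simp only [Set.mem_setOf_eq] at h1 h2
      rcases t.2.1 with h | h
      · rw [h] at h1; exact lt_irrefl _ h1
      · exact h2 h
    have hd23 : Disjoint O2 O3 := by
      rw [Set.disjoint_left]
      rintro t ⟨_, h1⟩ ⟨_, h2⟩
      simp only [Set.mem_setOf_eq] at h1 h2
      rcases t.2.1 with h | h
      · rw [h] at h1; exact lt_irrefl _ h1
      · exact h2 h
    have hcover : W \ {o} = O1 ∪ O2 ∪ O3 := by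
      ext t
      simp only [Set.mem_diff, Set.mem_union, Set.mem_inter_iff, Set.mem_setOf_eq,
        Set.mem_singleton_iff, hO1, hO2, hO3]
      constructor
      · rintro ⟨htW, hto⟩
        have htne : (t : E2) ≠ 0 := by
          intro hcon
          exact hto (Subtype.ext hcon)
        rcases t.2.1 with h | h
        · have h1ne : (t : E2) 1 ≠ 0 := by
            intro hcon
            exact htne (eq_zero_of_coords _ h hcon)
          exact Or.inr ⟨htW, h1ne⟩
        · have h0ne : (t : E2) 0 ≠ 0 := by
            intro hcon
            exact htne (eq_zero_of_coords _ hcon h)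
          rcases lt_or_gt_of_ne h0ne with hlt | hgt
          · exact Or.inl (Or.inr ⟨htW, hlt⟩)
          · exact Or.inl (Or.inl ⟨htW, hgt⟩)
      · rintro ((⟨htW, h'⟩ | ⟨htW, h'⟩) | ⟨htW, h'⟩) <;> refine ⟨htW, ?_⟩ <;>
          (intro hcon; rw [hcon] at h')
        · exact lt_irrefl _ h'
        · exact lt_irrefl _ h'
        · exact h' rfl
    -- images
    set B1 : Set E' := ι '' O1 with hB1
    set B2 : Set E' := ι '' O2 with hB2
    set B3 : Set E' := ι '' O3 with hB3
    have hBopen1 : IsOpen B1 := hι_open _ hOpen1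
    have hBopen2 : IsOpen B2 := hι_open _ hOpen2
    have hBopen3 : IsOpen B3 := hι_open _ hOpen3
    have hBne1 : B1.Nonempty := ⟨ι t1, Set.mem_image_of_mem _ ht1O1⟩
    have hBne2 : B2.Nonempty := ⟨ι t2, Set.mem_image_of_mem _ ht2O2⟩
    have hBne3 : B3.Nonempty := ⟨ι t3, Set.mem_image_of_mem _ ht3O3⟩
    have hBd12 : Disjoint B1 B2 := Set.disjoint_image_of_injective hι_inj hd12
    have hBd13 : Disjoint B1 B3 := Set.disjoint_image_of_injective hι_inj hd13
    have hBd23 : Disjoint B2 B3 := Set.disjoint_image_of_injective hι_inj hd23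
    have hιW : ι '' W = Metric.ball z r := by
      rw [hW, Set.image_preimage_eq_inter_range]
      exact Set.inter_eq_left.mpr hball
    have hBunion : B1 ∪ B2 ∪ B3 = Metric.ball z r \ {z} := by
      rw [hB1, hB2, hB3, ← Set.image_union, ← Set.image_union, ← hcover,
        Set.image_diff hι_inj, hιW, Set.image_singleton]
    -- connected cover of the punctured ball
    have hCC : ∃ C1 C2 : Set E', IsPreconnected C1 ∧ IsPreconnected C2 ∧
        Metric.ball z r \ {z} = C1 ∪ C2 := by
      rcases eq_or_lt_of_le (show 1 ≤ d from hd) with hd1 | hd2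
      · -- d = 1
        have hd1' : d = 1 := hd1.symm
        subst hd1'
        refine ⟨Metric.ball z r ∩ {v : E' | v 0 < z 0},
          Metric.ball z r ∩ {v : E' | z 0 < v 0}, ?_, ?_, ?_⟩
        · exact ((convex_ball z r).inter
            (convex_halfSpace_lt ⟨fun a b => rfl, fun c a => rfl⟩ (z 0))).isPreconnected
        · exact ((convex_ball z r).inter
            (convex_halfSpace_gt ⟨fun a b => rfl, fun c a => rfl⟩ (z 0))).isPreconnected
        · ext v
          simp only [Set.mem_diff, Set.mem_union, Set.mem_inter_iff, Set.mem_setOf_eq,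
            Set.mem_singleton_iff]
          constructor
          · rintro ⟨hv, hvz⟩
            have hvz' : v 0 ≠ z 0 := by
              intro hcon
              apply hvz
              ext i
              have : i = 0 := Subsingleton.elim _ _
              rw [this, hcon]
            rcases lt_or_gt_of_ne hvz' with h | h
            · exact Or.inl ⟨hv, h⟩
            · exact Or.inr ⟨hv, h⟩
          · rintro (⟨hv, h⟩ | ⟨hv, h⟩) <;> refine ⟨hv, ?_⟩ <;>
              (intro hcon; rw [hcon] at h) <;>
              exact lt_irrefl _ h
      · -- d ≥ 2
        have hrank : 1 < Module.rank ℝ E' := by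
          have hfr : Module.finrank ℝ E' = d := finrank_euclideanSpace_fin
          have := Module.finrank_eq_rank ℝ E'
          rw [hfr] at this
          rw [← this]
          exact_mod_cast hd2
        have hpc := isPathConnected_ball_diff_singleton hrank z hr
        exact ⟨_, _, hpc.isConnected.isPreconnected, hpc.isConnected.isPreconnected,
          (Set.union_self _).symm⟩
    obtain ⟨C1, C2, hC1, hC2, hC12⟩ := hCC
    have hC1sub : C1 ⊆ B1 ∪ B2 ∪ B3 := by
      rw [hBunion, hC12]; exact Set.subset_union_left
    have hC2sub : C2 ⊆ B1 ∪ B2 ∪ B3 := by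
      rw [hBunion, hC12]; exact Set.subset_union_right
    have hBsub : ∀ {Bk : Set E'}, Bk ⊆ B1 ∪ B2 ∪ B3 → Bk ⊆ C1 ∪ C2 := by
      intro Bk hk
      rw [← hC12, ← hBunion]; exact hk
    have key : ∀ {Bi Bj Bk : Set E'}, Bk.Nonempty → Disjoint Bk Bi → Disjoint Bk Bj →
        C1 ⊆ Bi → C2 ⊆ Bj → Bk ⊆ C1 ∪ C2 → False := by
      rintro Bi Bj Bk ⟨x, hx⟩ dki dkj h1 h2 hsub
      rcases hsub hx with h | h
      · exact Set.disjoint_left.mp dki hx (h1 h)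
      · exact Set.disjoint_left.mp dkj hx (h2 h)
    have hs1 := preconnected_in_three hC1 hBopen1 hBopen2 hBopen3 hBd12 hBd13 hBd23 hC1sub
    have hs2 := preconnected_in_three hC2 hBopen1 hBopen2 hBopen3 hBd12 hBd13 hBd23 hC2sub
    have hsubB1 : B1 ⊆ C1 ∪ C2 := hBsub (Set.subset_union_left.trans Set.subset_union_left)
    have hsubB2 : B2 ⊆ C1 ∪ C2 := hBsub (Set.subset_union_right.trans Set.subset_union_left)
    have hsubB3 : B3 ⊆ C1 ∪ C2 := hBsub Set.subset_union_right
    rcases hs1 with h1 | h1 | h1 <;> rcases hs2 with h2 | h2 | h2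
    · exact key hBne3 hBd13.symm hBd13.symm h1 h2 hsubB3
    · exact key hBne3 hBd13.symm hBd23.symm h1 h2 hsubB3
    · exact key hBne2 hBd12.symm hBd23 h1 h2 hsubB2
    · exact key hBne3 hBd23.symm hBd13.symm h1 h2 hsubB3
    · exact key hBne1 hBd12 hBd12 h1 h2 hsubB1
    · exact key hBne1 hBd12 hBd13 h1 h2 hsubB1
    · exact key hBne2 hBd23 hBd12.symm h1 h2 hsubB2
    · exact key hBne1 hBd13 hBd12 h1 h2 hsubB1
    · exact key hBne1 hBd13 hBd13 h1 h2 hsubB1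

lemma not_manifold' :
    ¬ ∃ (d : ℕ) (U : Set E2) (V : Set (EuclideanSpace ℝ (Fin d))),
        IsOpen U ∧ (0 : E2) ∈ U ∧ IsOpen V ∧
        Nonempty (↥({p : E2 | ∀ q, ff p ≤ ff q} ∩ U) ≃ₜ ↥V) := by
  rw [show {p : E2 | ∀ q, ff p ≤ ff q} = {p : E2 | p 0 = 0 ∨ p 1 = 0} from Set.ext ff_min_iff]
  exact not_manifold

end CrossPL

/-- The C¹ function `f(x,y) = x²y²/(x²+y²)` (with `f(0,0) = 0` by the convention `0/0 = 0`)
satisfies a PL inequality around the origin, its set of global minimizers is the union of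
the two coordinate axes, and that set is not a C⁰ submanifold at the origin (no neighborhood
of `0` in it is homeomorphic to an open subset of some `ℝ^d`). -/
theorem pl_cross_counterexample :
    letI f : EuclideanSpace ℝ (Fin 2) → ℝ :=
      fun p => (p 0) ^ 2 * (p 1) ^ 2 / ((p 0) ^ 2 + (p 1) ^ 2)
    letI S : Set (EuclideanSpace ℝ (Fin 2)) := {p | ∀ q, f p ≤ f q}
    ContDiff ℝ 1 f ∧
    (∃ μ : ℝ, 0 < μ ∧ ∀ᶠ p in 𝓝 (0 : EuclideanSpace ℝ (Fin 2)),
      f p ≤ (1 / (2 * μ)) * ‖gradient f p‖ ^ 2) ∧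
    S = {p | p 0 = 0 ∨ p 1 = 0} ∧
    ¬ ∃ (d : ℕ) (U : Set (EuclideanSpace ℝ (Fin 2))) (V : Set (EuclideanSpace ℝ (Fin d))),
        IsOpen U ∧ (0 : EuclideanSpace ℝ (Fin 2)) ∈ U ∧ IsOpen V ∧
        Nonempty (↥(S ∩ U) ≃ₜ ↥V) := by
  exact ⟨contDiff_ff, ⟨1/2, by norm_num, Filter.Eventually.of_forall pl_ineq⟩,
    Set.ext ff_min_iff, not_manifold'⟩
end

section
/- Consider f : ℝ² → ℝ, f(x,y) = (1/2)(x²+1)y², a C^∞ function whose set of minimizers is the line S = {(x,0)}. For t ∈ (0, 1/3) let p(t) = (√((1-t)/3), √t). Then ∇²f(p(t)) is invertible, and the Newton iterate p(t) - ∇²f(p(t))⁻¹∇f(p(t)) lies at distance (2/3)(1-t)/√t from S. In particular, as t → 0⁺ the starting point tends to S while the Newton iterate's distance to S tends to +∞. -/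
open Metric Filter Topology

theorem infDist_to_line' (q : EuclideanSpace ℝ (Fin 2)) :
    Metric.infDist q {q : EuclideanSpace ℝ (Fin 2) | q 1 = 0} = |q 1| := by
  apply le_antisymm
  · set s : EuclideanSpace ℝ (Fin 2) := (WithLp.equiv 2 (Fin 2 → ℝ)).symm ![q 0, 0] with hs
    have hmem : s ∈ {q : EuclideanSpace ℝ (Fin 2) | q 1 = 0} := by
      simp [hs, WithLp.equiv_symm_apply, PiLp.toLp_apply]
    calc Metric.infDist q {q : EuclideanSpace ℝ (Fin 2) | q 1 = 0} ≤ dist q s :=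
          Metric.infDist_le_dist_of_mem hmem
    _ = |q 1| := by
        rw [EuclideanSpace.dist_eq, Fin.sum_univ_two]
        simp [hs, WithLp.equiv_symm_apply, PiLp.toLp_apply, Real.sqrt_sq_eq_abs]
  · rw [Metric.infDist_eq_iInf]
    haveI : Nonempty ↑{q : EuclideanSpace ℝ (Fin 2) | q 1 = 0} := ⟨⟨0, by simp⟩⟩
    apply le_ciInf
    rintro ⟨y, hy⟩
    have h1 : |q 1 - y 1| ≤ dist q y := by
      rw [EuclideanSpace.dist_eq, Fin.sum_univ_two, ← Real.sqrt_sq_eq_abs]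
      apply Real.sqrt_le_sqrt
      simp only [Real.dist_eq, sq_abs]
      nlinarith [sq_nonneg (q 0 - y 0)]
    simpa [hy.out] using h1

noncomputable def Gfun (q : EuclideanSpace ℝ (Fin 2)) : EuclideanSpace ℝ (Fin 2) :=
  (WithLp.equiv 2 (Fin 2 → ℝ)).symm ![q 0 * q 1 ^ 2, ((q 0) ^ 2 + 1) * q 1]

theorem proj_hasFDerivAt (i : Fin 2) (q : EuclideanSpace ℝ (Fin 2)) :
    HasFDerivAt (fun q : EuclideanSpace ℝ (Fin 2) => q i)
      (EuclideanSpace.proj i : EuclideanSpace ℝ (Fin 2) →L[ℝ] ℝ) q := by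
  have := (EuclideanSpace.proj i : EuclideanSpace ℝ (Fin 2) →L[ℝ] ℝ).hasFDerivAt (x := q)
  simpa using this

theorem grad_f (q : EuclideanSpace ℝ (Fin 2)) :
    HasGradientAt (fun q : EuclideanSpace ℝ (Fin 2) => (1 / 2) * ((q 0) ^ 2 + 1) * (q 1) ^ 2)
      (Gfun q) q := by
  rw [hasGradientAt_iff_hasFDerivAt]
  have h0 := proj_hasFDerivAt 0 q
  have h1 := proj_hasFDerivAt 1 q
  have h := (((h0.mul h0).add_const 1).const_mul ((1:ℝ)/2)).mul (h1.mul h1)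
  simp only [pow_two]
  refine h.congr_fderiv ?_
  ext v
  simp [InnerProductSpace.toDual_apply_apply, PiLp.inner_apply, Fin.sum_univ_two,
    RCLike.inner_apply, Gfun, WithLp.equiv_symm_apply, PiLp.toLp_apply]
  ring

noncomputable def Hclm (q : EuclideanSpace ℝ (Fin 2)) :
    EuclideanSpace ℝ (Fin 2) →L[ℝ] EuclideanSpace ℝ (Fin 2) :=
  ((PiLp.continuousLinearEquiv 2 ℝ (fun _ : Fin 2 => ℝ)).symm :
      (Fin 2 → ℝ) →L[ℝ] EuclideanSpace ℝ (Fin 2)).comp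
    (ContinuousLinearMap.pi
      ![(q 1 ^ 2) • (EuclideanSpace.proj 0 : EuclideanSpace ℝ (Fin 2) →L[ℝ] ℝ) + (2 * q 0 * q 1) • (EuclideanSpace.proj 1 : EuclideanSpace ℝ (Fin 2) →L[ℝ] ℝ),
        (2 * q 0 * q 1) • (EuclideanSpace.proj 0 : EuclideanSpace ℝ (Fin 2) →L[ℝ] ℝ) + ((q 0) ^ 2 + 1) • (EuclideanSpace.proj 1 : EuclideanSpace ℝ (Fin 2) →L[ℝ] ℝ)])

theorem Hclm_apply (q w : EuclideanSpace ℝ (Fin 2)) :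
    Hclm q w = (WithLp.equiv 2 (Fin 2 → ℝ)).symm
      ![q 1 ^ 2 * w 0 + 2 * q 0 * q 1 * w 1,
        2 * q 0 * q 1 * w 0 + ((q 0) ^ 2 + 1) * w 1] := by
  ext i
  fin_cases i <;>
    simp [Hclm, WithLp.equiv_symm_apply, PiLp.toLp_apply, PiLp.continuousLinearEquiv_symm_apply,
      ContinuousLinearMap.pi_apply, mul_comm]

theorem hess_f (q : EuclideanSpace ℝ (Fin 2)) : HasFDerivAt Gfun (Hclm q) q := by
  have key : HasFDerivAt (fun q : EuclideanSpace ℝ (Fin 2) =>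
      (![q 0 * q 1 ^ 2, ((q 0) ^ 2 + 1) * q 1] : Fin 2 → ℝ))
      (ContinuousLinearMap.pi
        ![(q 1 ^ 2) • (EuclideanSpace.proj 0 : EuclideanSpace ℝ (Fin 2) →L[ℝ] ℝ) + (2 * q 0 * q 1) • (EuclideanSpace.proj 1 : EuclideanSpace ℝ (Fin 2) →L[ℝ] ℝ),
          (2 * q 0 * q 1) • (EuclideanSpace.proj 0 : EuclideanSpace ℝ (Fin 2) →L[ℝ] ℝ) + ((q 0) ^ 2 + 1) • (EuclideanSpace.proj 1 : EuclideanSpace ℝ (Fin 2) →L[ℝ] ℝ)]) q := by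
    rw [hasFDerivAt_pi']
    intro i
    have h0 := proj_hasFDerivAt 0 q
    have h1 := proj_hasFDerivAt 1 q
    fin_cases i
    · simp only [ContinuousLinearMap.proj_pi, Matrix.cons_val_zero]
      have h := h0.mul (h1.mul h1)
      simp only [pow_two]
      refine h.congr_fderiv ?_
      ext v; simp; ring
    · simp only [ContinuousLinearMap.proj_pi, Matrix.cons_val_one, Matrix.head_cons]
      have h := ((h0.mul h0).add_const 1).mul h1
      simp only [pow_two]
      refine h.congr_fderiv ?_
      ext v; simp; ring
  have hG : Gfun = ((PiLp.continuousLinearEquiv 2 ℝ (fun _ : Fin 2 => ℝ)).symm.toContinuousLinearMap :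
      (Fin 2 → ℝ) → EuclideanSpace ℝ (Fin 2)) ∘
      (fun q : EuclideanSpace ℝ (Fin 2) => (![q 0 * q 1 ^ 2, ((q 0) ^ 2 + 1) * q 1] : Fin 2 → ℝ)) := rfl
  have hH : Hclm q = ((PiLp.continuousLinearEquiv 2 ℝ (fun _ : Fin 2 => ℝ)).symm.toContinuousLinearMap).comp
      (ContinuousLinearMap.pi
        ![(q 1 ^ 2) • (EuclideanSpace.proj 0 : EuclideanSpace ℝ (Fin 2) →L[ℝ] ℝ) + (2 * q 0 * q 1) • (EuclideanSpace.proj 1 : EuclideanSpace ℝ (Fin 2) →L[ℝ] ℝ),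
          (2 * q 0 * q 1) • (EuclideanSpace.proj 0 : EuclideanSpace ℝ (Fin 2) →L[ℝ] ℝ) + ((q 0) ^ 2 + 1) • (EuclideanSpace.proj 1 : EuclideanSpace ℝ (Fin 2) →L[ℝ] ℝ)]) := rfl
  rw [hG, hH]
  exact ((PiLp.continuousLinearEquiv 2 ℝ (fun _ : Fin 2 => ℝ)).symm.toContinuousLinearMap.hasFDerivAt).comp q key

/-- Failure of Newton's method near the non-isolated minima of
`f(x,y) = ½(x²+1)y²`: for `t ∈ (0, 1/3)` and `p(t) = (√((1-t)/3), √t)`, the Hessian at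
`p(t)` is invertible and the Newton iterate lies at distance `(2/3)(1-t)/√t` from the
solution line `S = {y = 0}`; as `t → 0⁺` the base point tends to `S` while the Newton
iterate's distance to `S` tends to `+∞`. -/
theorem newton_failure :
    letI f : EuclideanSpace ℝ (Fin 2) → ℝ :=
      fun q => (1 / 2) * ((q 0) ^ 2 + 1) * (q 1) ^ 2
    letI S : Set (EuclideanSpace ℝ (Fin 2)) := {q | q 1 = 0}
    letI p : ℝ → EuclideanSpace ℝ (Fin 2) :=
      fun t => (WithLp.equiv 2 (Fin 2 → ℝ)).symm ![Real.sqrt ((1 - t) / 3), Real.sqrt t]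
    (∀ t ∈ Set.Ioo (0 : ℝ) (1 / 3),
      Function.Bijective (fderiv ℝ (gradient f) (p t)) ∧
      ∀ w : EuclideanSpace ℝ (Fin 2),
        fderiv ℝ (gradient f) (p t) w = gradient f (p t) →
        Metric.infDist (p t - w) S = (2 / 3) * (1 - t) / Real.sqrt t) ∧
    Filter.Tendsto (fun t => Metric.infDist (p t) S) (𝓝[>] (0 : ℝ)) (𝓝 0) ∧
    Filter.Tendsto (fun t => (2 / 3) * (1 - t) / Real.sqrt t) (𝓝[>] (0 : ℝ)) Filter.atTop := by
  beta_reduce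
  have hgrad : gradient (fun q : EuclideanSpace ℝ (Fin 2) => (1 / 2) * ((q 0) ^ 2 + 1) * (q 1) ^ 2)
      = Gfun := funext fun q => (grad_f q).gradient
  refine ⟨?_, ?_, ?_⟩
  · intro t ht
    obtain ⟨ht0, ht13⟩ := ht
    set x := Real.sqrt ((1 - t) / 3) with hxdef
    set y := Real.sqrt t with hydef
    set pt : EuclideanSpace ℝ (Fin 2) := (WithLp.equiv 2 (Fin 2 → ℝ)).symm ![x, y] with hptdef
    have hp0 : pt 0 = x := rfl
    have hp1 : pt 1 = y := rfl
    have hx2 : x ^ 2 = (1 - t) / 3 := Real.sq_sqrt (by linarith)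
    have hy2 : y ^ 2 = t := Real.sq_sqrt ht0.le
    have hy : 0 < y := Real.sqrt_pos.mpr ht0
    have hx : 0 < x := Real.sqrt_pos.mpr (by linarith)
    have hfd : fderiv ℝ (gradient (fun q : EuclideanSpace ℝ (Fin 2) =>
        (1 / 2) * ((q 0) ^ 2 + 1) * (q 1) ^ 2)) pt = Hclm pt := by
      rw [hgrad]; exact (hess_f pt).fderiv
    have hinj : Function.Injective (Hclm pt) := by
      intro u v huv
      rw [Hclm_apply, Hclm_apply] at huv
      have e0 : y ^ 2 * u 0 + 2 * x * y * u 1 = y ^ 2 * v 0 + 2 * x * y * v 1 := by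
        have := congrArg (fun z : EuclideanSpace ℝ (Fin 2) => z 0) huv
        simpa [WithLp.equiv_symm_apply, PiLp.toLp_apply, hp0, hp1] using this
      have e1 : 2 * x * y * u 0 + (x ^ 2 + 1) * u 1 = 2 * x * y * v 0 + (x ^ 2 + 1) * v 1 := by
        have := congrArg (fun z : EuclideanSpace ℝ (Fin 2) => z 1) huv
        simpa [WithLp.equiv_symm_apply, PiLp.toLp_apply, hp0, hp1] using this
      have key : t * t * (u 0 - v 0) = 0 := by
        linear_combination (x ^ 2 + 1) * e0 - 2 * x * y * e1
          - (1 - 3 * x ^ 2) * (u 0 - v 0) * hy2 + 3 * t * (u 0 - v 0) * hx2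
      have hd0 : u 0 = v 0 := by
        have htne : t * t ≠ 0 := by positivity
        have := (mul_eq_zero.mp key).resolve_left htne
        linarith
      have hd1 : u 1 = v 1 := by
        rw [hd0] at e0
        have h2 : 2 * x * y * u 1 = 2 * x * y * v 1 := by linarith
        exact mul_left_cancel₀ (by positivity) h2
      ext i
      fin_cases i
      · exact hd0
      · exact hd1
    constructor
    · rw [hfd]
      exact ⟨hinj, LinearMap.injective_iff_surjective.mp hinj⟩
    · intro w hw
      rw [hfd, hgrad] at hw
      set w0 : EuclideanSpace ℝ (Fin 2) :=
        (WithLp.equiv 2 (Fin 2 → ℝ)).symm ![-(x * (x ^ 2 + 1)) / t, (1 - x ^ 2) / y] with hw0def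
      have hsol : Hclm pt w0 = Gfun pt := by
        rw [Hclm_apply]
        unfold Gfun
        ext i
        fin_cases i
        · simp only [WithLp.equiv_symm_apply, PiLp.toLp_apply, Matrix.cons_val_zero, Fin.zero_eta, Fin.mk_one, Matrix.cons_val_one, Matrix.head_cons, hp0, hp1, hw0def]
          field_simp
          linear_combination (-3*t)*hx2 + (-(1+x^2+t))*hy2
        · simp only [WithLp.equiv_symm_apply, PiLp.toLp_apply, Matrix.cons_val_one, Matrix.head_cons, Fin.zero_eta, Fin.mk_one, Matrix.cons_val_zero, hp0, hp1, hw0def]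
          field_simp
          linear_combination (-3*t)*hx2 + (-(2*x^2+t))*hy2
      have hww : w = w0 := hinj (hw.trans hsol.symm)
      rw [hww, infDist_to_line']
      have hcoord : (pt - w0) 1 = y - (1 - x ^ 2) / y := by
        simp [PiLp.sub_apply, hp1, hw0def, WithLp.equiv_symm_apply, PiLp.toLp_apply]
      rw [hcoord]
      have hval : y - (1 - x ^ 2) / y = -((2 / 3) * (1 - t) / y) := by
        rw [hx2]
        field_simp
        linear_combination 3 * hy2
      have hnn : 0 ≤ 2 / 3 * (1 - t) / y := div_nonneg (by nlinarith) hy.le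
      rw [hval, abs_neg, abs_of_nonneg hnn]
  · have heq : (fun t => Metric.infDist
        ((WithLp.equiv 2 (Fin 2 → ℝ)).symm ![Real.sqrt ((1 - t) / 3), Real.sqrt t] :
          EuclideanSpace ℝ (Fin 2)) {q : EuclideanSpace ℝ (Fin 2) | q 1 = 0})
        = fun t => Real.sqrt t := by
      funext t
      rw [infDist_to_line']
      simp [WithLp.equiv_symm_apply, PiLp.toLp_apply]
    rw [heq]
    have := Real.continuous_sqrt.tendsto 0
    simpa using this.mono_left nhdsWithin_le_nhds
  · simp only [div_eq_mul_inv]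
    apply Filter.Tendsto.pos_mul_atTop (C := (2:ℝ)/3 * (1 - 0)) (by norm_num)
    · apply Filter.Tendsto.mono_left _ nhdsWithin_le_nhds
      exact (tendsto_const_nhds.mul (tendsto_const_nhds.sub tendsto_id))
    · apply Filter.Tendsto.comp tendsto_inv_nhdsGT_zero
      rw [tendsto_nhdsWithin_iff]
      constructor
      · simpa using (Real.continuous_sqrt.tendsto 0).mono_left nhdsWithin_le_nhds
      · filter_upwards [self_mem_nhdsWithin] with t ht
        exact Real.sqrt_pos.mpr ht
end

section
/- For f : ℝ² → ℝ, f(x,y) = (x²+y²-1)², whose minimizer set is the unit circle, fix Δ > 0 and for small t > 0 consider the point p(t) = (0, 1-t). The vectors s±(t) = (±√(Δ² - t²(t-2)²/(4(t-1)²)), t(t-2)/(2(t-1))) are global solutions of the trust-region subproblem min_{‖s‖≤Δ} ⟨s, ∇f(p(t))⟩ + (1/2)⟨s, ∇²f(p(t))s⟩, and as t → 0⁺ we have s±(t) → (±Δ, 0). In particular the exact trust-region step does not vanish as the base point approaches the solution set. -/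
open Metric Filter Topology
open scoped RealInnerProductSpace

noncomputable section TRaux

local notation "E2" => EuclideanSpace ℝ (Fin 2)

private def Faux (q : EuclideanSpace ℝ (Fin 2)) : ℝ := ((q 0) ^ 2 + (q 1) ^ 2 - 1) ^ 2

private def Gaux (q : EuclideanSpace ℝ (Fin 2)) : EuclideanSpace ℝ (Fin 2) :=
  (4 * ((q 0) ^ 2 + (q 1) ^ 2 - 1)) • q

private def Laux (x : EuclideanSpace ℝ (Fin 2)) : EuclideanSpace ℝ (Fin 2) →L[ℝ] ℝ :=
  ((2 * x 0) • EuclideanSpace.proj 0 + (2 * x 1) • EuclideanSpace.proj 1 :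
    EuclideanSpace ℝ (Fin 2) →L[ℝ] ℝ)

private def DGaux (x : EuclideanSpace ℝ (Fin 2)) :
    EuclideanSpace ℝ (Fin 2) →L[ℝ] EuclideanSpace ℝ (Fin 2) :=
  (4 * ((x 0) ^ 2 + (x 1) ^ 2 - 1)) • ContinuousLinearMap.id ℝ (EuclideanSpace ℝ (Fin 2)) +
    ((4 : ℝ) • Laux x).smulRight x

private lemma inner_two (a b : EuclideanSpace ℝ (Fin 2)) : ⟪a, b⟫ = a 0 * b 0 + a 1 * b 1 := by
  simp [PiLp.inner_apply, Fin.sum_univ_two]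
  ring

private lemma sq_fderiv {g : EuclideanSpace ℝ (Fin 2) → ℝ}
    {g' : EuclideanSpace ℝ (Fin 2) →L[ℝ] ℝ} {x : EuclideanSpace ℝ (Fin 2)}
    (h : HasFDerivAt g g' x) :
    HasFDerivAt (fun q => g q ^ 2) ((2 * g x) • g') x := by
  have := h.mul h
  have e : (fun q => g q ^ 2) = fun q => g q * g q := by funext q; ring
  rw [e]
  refine this.congr_fderiv ?_
  ext w
  simp
  try ring

private lemma hasFDerivC (x : EuclideanSpace ℝ (Fin 2)) :
    HasFDerivAt (fun q : EuclideanSpace ℝ (Fin 2) => (q 0) ^ 2 + (q 1) ^ 2 - 1) (Laux x) x := by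
  have hproj : ∀ i : Fin 2, HasFDerivAt (fun q : EuclideanSpace ℝ (Fin 2) => q i)
      (EuclideanSpace.proj i : EuclideanSpace ℝ (Fin 2) →L[ℝ] ℝ) x :=
    fun i => (EuclideanSpace.proj i : EuclideanSpace ℝ (Fin 2) →L[ℝ] ℝ).hasFDerivAt
  have h0 := sq_fderiv (hproj 0)
  have h1 := sq_fderiv (hproj 1)
  have := (h0.add h1).sub_const 1
  refine this.congr_fderiv ?_
  rfl

private lemma hasGrad (x : EuclideanSpace ℝ (Fin 2)) : HasGradientAt Faux (Gaux x) x := by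
  have hf : HasFDerivAt Faux ((2 * ((x 0) ^ 2 + (x 1) ^ 2 - 1)) • Laux x) x :=
    sq_fderiv (hasFDerivC x)
  rw [hasGradientAt_iff_hasFDerivAt]
  refine hf.congr_fderiv ?_
  refine ContinuousLinearMap.ext fun w => ?_
  simp [InnerProductSpace.toDual_apply_apply, Gaux, inner_two, Laux, EuclideanSpace.proj,
    PiLp.smul_apply]
  ring

private lemma gradF : gradient Faux = Gaux := funext fun x => (hasGrad x).gradient

private lemma hasFDerivG (x : EuclideanSpace ℝ (Fin 2)) : HasFDerivAt Gaux (DGaux x) x := by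
  have hcm : HasFDerivAt (fun q : EuclideanSpace ℝ (Fin 2) => 4 * ((q 0) ^ 2 + (q 1) ^ 2 - 1))
      ((4 : ℝ) • Laux x) x := (hasFDerivC x).const_mul 4
  have := hcm.smul (hasFDerivAt_id x)
  exact this

private def Pt (t : ℝ) : EuclideanSpace ℝ (Fin 2) := (WithLp.equiv 2 (Fin 2 → ℝ)).symm ![0, 1 - t]

private lemma Pt0 (t : ℝ) : Pt t 0 = 0 := rfl
private lemma Pt1 (t : ℝ) : Pt t 1 = 1 - t := rfl

private lemma m_val (t : ℝ) (w : EuclideanSpace ℝ (Fin 2)) :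
    ⟪w, gradient Faux (Pt t)⟫ + (1 / 2) * ⟪w, fderiv ℝ (gradient Faux) (Pt t) w⟫ =
    4 * ((1 - t) ^ 2 - 1) * (1 - t) * w 1 +
      (1 / 2) * (4 * ((1 - t) ^ 2 - 1) * ((w 0) ^ 2 + (w 1) ^ 2) +
        8 * (1 - t) ^ 2 * (w 1) ^ 2) := by
  rw [gradF, (hasFDerivG (Pt t)).fderiv]
  have h1 : ⟪w, Gaux (Pt t)⟫ = 4 * ((1 - t) ^ 2 - 1) * (1 - t) * w 1 := by
    simp [Gaux, inner_two, Pt0, Pt1, PiLp.smul_apply, smul_eq_mul]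
    ring
  have h2 : ⟪w, DGaux (Pt t) w⟫ =
      4 * ((1 - t) ^ 2 - 1) * ((w 0) ^ 2 + (w 1) ^ 2) + 8 * (1 - t) ^ 2 * (w 1) ^ 2 := by
    simp [DGaux, inner_two, Pt0, Pt1, Laux, PiLp.smul_apply, smul_eq_mul,
      ContinuousLinearMap.add_apply, ContinuousLinearMap.smul_apply,
      ContinuousLinearMap.smulRight_apply, ContinuousLinearMap.id_apply,
      EuclideanSpace.proj]
    ring
  rw [h1, h2]

private lemma scalar_ineq (Δ t u0 u1 s1 : ℝ) (ht : 0 < t) (ht2 : t < 1 / 2)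
    (hw : u0 ^ 2 + u1 ^ 2 ≤ Δ ^ 2)
    (hs1 : s1 ^ 2 = Δ ^ 2 - (t * (t - 2) / (2 * (t - 1))) ^ 2) :
    4 * ((1 - t) ^ 2 - 1) * (1 - t) * (t * (t - 2) / (2 * (t - 1))) +
      (1 / 2) * (4 * ((1 - t) ^ 2 - 1) * (s1 ^ 2 + (t * (t - 2) / (2 * (t - 1))) ^ 2) +
        8 * (1 - t) ^ 2 * (t * (t - 2) / (2 * (t - 1))) ^ 2) ≤
    4 * ((1 - t) ^ 2 - 1) * (1 - t) * u1 +
      (1 / 2) * (4 * ((1 - t) ^ 2 - 1) * (u0 ^ 2 + u1 ^ 2) + 8 * (1 - t) ^ 2 * u1 ^ 2) := by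
  have ht1 : t - 1 ≠ 0 := by intro h; nlinarith
  have key : (4 * ((1 - t) ^ 2 - 1) * (1 - t) * u1 +
      (1 / 2) * (4 * ((1 - t) ^ 2 - 1) * (u0 ^ 2 + u1 ^ 2) + 8 * (1 - t) ^ 2 * u1 ^ 2)) -
      (4 * ((1 - t) ^ 2 - 1) * (1 - t) * (t * (t - 2) / (2 * (t - 1))) +
      (1 / 2) * (4 * ((1 - t) ^ 2 - 1) * (s1 ^ 2 + (t * (t - 2) / (2 * (t - 1))) ^ 2) +
        8 * (1 - t) ^ 2 * (t * (t - 2) / (2 * (t - 1))) ^ 2)) =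
      (4 * t * (2 - t)) / 2 * (Δ ^ 2 - (u0 ^ 2 + u1 ^ 2)) +
        4 * (1 - t) ^ 2 * (u1 - t * (t - 2) / (2 * (t - 1))) ^ 2 := by
    rw [hs1]
    field_simp
    ring
  have h1 : 0 ≤ (4 * t * (2 - t)) / 2 * (Δ ^ 2 - (u0 ^ 2 + u1 ^ 2)) := by
    apply mul_nonneg (by nlinarith) (by linarith)
  have h2 : 0 ≤ 4 * (1 - t) ^ 2 * (u1 - t * (t - 2) / (2 * (t - 1))) ^ 2 := by positivity
  linarith

private lemma sqarg (Δ t : ℝ) (ht : 0 < t) (ht2 : t < 1 / 2) (htΔ : t < Δ / 2) :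
    t ^ 2 * (t - 2) ^ 2 / (4 * (t - 1) ^ 2) ≤ 4 * t ^ 2 ∧ 4 * t ^ 2 < Δ ^ 2 := by
  have h1 : (0:ℝ) < 4 * (t - 1) ^ 2 := by nlinarith
  constructor
  · rw [div_le_iff₀ h1]
    nlinarith [mul_nonneg (mul_nonneg (sq_nonneg t) (by linarith : (0:ℝ) ≤ 2 - 3 * t))
      (by linarith : (0:ℝ) ≤ 6 - 5 * t)]
  · nlinarith

private lemma norm_s (Δ t σ : ℝ) (hσ : σ = 1 ∨ σ = -1) (hΔ : 0 ≤ Δ)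
    (h : 0 ≤ Δ ^ 2 - t ^ 2 * (t - 2) ^ 2 / (4 * (t - 1) ^ 2)) (ht1 : t - 1 ≠ 0) :
    ‖((WithLp.equiv 2 (Fin 2 → ℝ)).symm
      ![σ * Real.sqrt (Δ ^ 2 - t ^ 2 * (t - 2) ^ 2 / (4 * (t - 1) ^ 2)),
        t * (t - 2) / (2 * (t - 1))] : EuclideanSpace ℝ (Fin 2))‖ = Δ := by
  have hσ2 : σ ^ 2 = 1 := by rcases hσ with h | h <;> simp [h]
  have hA : (t * (t - 2) / (2 * (t - 1))) ^ 2 = t ^ 2 * (t - 2) ^ 2 / (4 * (t - 1) ^ 2) := by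
    field_simp
    ring
  rw [EuclideanSpace.norm_eq]
  rw [Fin.sum_univ_two]
  have c0 : ((WithLp.equiv 2 (Fin 2 → ℝ)).symm
      ![σ * Real.sqrt (Δ ^ 2 - t ^ 2 * (t - 2) ^ 2 / (4 * (t - 1) ^ 2)),
        t * (t - 2) / (2 * (t - 1))] : EuclideanSpace ℝ (Fin 2)) 0 =
      σ * Real.sqrt (Δ ^ 2 - t ^ 2 * (t - 2) ^ 2 / (4 * (t - 1) ^ 2)) := rfl
  have c1 : ((WithLp.equiv 2 (Fin 2 → ℝ)).symm
      ![σ * Real.sqrt (Δ ^ 2 - t ^ 2 * (t - 2) ^ 2 / (4 * (t - 1) ^ 2)),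
        t * (t - 2) / (2 * (t - 1))] : EuclideanSpace ℝ (Fin 2)) 1 =
      t * (t - 2) / (2 * (t - 1)) := rfl
  rw [c0, c1]
  simp only [Real.norm_eq_abs, sq_abs]
  rw [mul_pow, Real.sq_sqrt h, hσ2, one_mul, hA]
  rw [sub_add_cancel]
  exact Real.sqrt_sq hΔ

private lemma tendsto_s (Δ σ : ℝ) (hΔ : 0 < Δ) :
    Tendsto (fun t : ℝ => ((WithLp.equiv 2 (Fin 2 → ℝ)).symm
      ![σ * Real.sqrt (Δ ^ 2 - t ^ 2 * (t - 2) ^ 2 / (4 * (t - 1) ^ 2)),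
        t * (t - 2) / (2 * (t - 1))] : EuclideanSpace ℝ (Fin 2))) (𝓝[>] (0:ℝ))
      (𝓝 ((WithLp.equiv 2 (Fin 2 → ℝ)).symm ![σ * Δ, 0])) := by
  have hc1 : ContinuousAt
      (fun t : ℝ => σ * Real.sqrt (Δ ^ 2 - t ^ 2 * (t - 2) ^ 2 / (4 * (t - 1) ^ 2))) 0 := by
    apply ContinuousAt.mul continuousAt_const
    apply ContinuousAt.sqrt
    apply ContinuousAt.sub continuousAt_const
    exact ContinuousAt.div (by fun_prop) (by fun_prop) (by norm_num)
  have hc2 : ContinuousAt (fun t : ℝ => t * (t - 2) / (2 * (t - 1))) 0 :=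
    ContinuousAt.div (by fun_prop) (by fun_prop) (by norm_num)
  have hpi : Tendsto (fun t : ℝ =>
      ![σ * Real.sqrt (Δ ^ 2 - t ^ 2 * (t - 2) ^ 2 / (4 * (t - 1) ^ 2)),
        t * (t - 2) / (2 * (t - 1))]) (𝓝[>] (0:ℝ)) (𝓝 ![σ * Δ, 0]) := by
    rw [tendsto_pi_nhds]
    intro i
    fin_cases i
    · have := hc1.tendsto.mono_left (nhdsWithin_le_nhds (s := Set.Ioi (0:ℝ)))
      simpa [Real.sqrt_sq hΔ.le] using this
    · have := hc2.tendsto.mono_left (nhdsWithin_le_nhds (s := Set.Ioi (0:ℝ)))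
      have hval : (0:ℝ) * (0 - 2) / (2 * (0 - 1)) = 0 := by norm_num
      simpa [hval] using this
  exact ((PiLp.continuous_toLp 2 (fun _ : Fin 2 => ℝ)).tendsto _).comp hpi

private def Sv (Δ σ t : ℝ) : EuclideanSpace ℝ (Fin 2) :=
  (WithLp.equiv 2 (Fin 2 → ℝ)).symm
    ![σ * Real.sqrt (Δ ^ 2 - t ^ 2 * (t - 2) ^ 2 / (4 * (t - 1) ^ 2)),
      t * (t - 2) / (2 * (t - 1))]

private def M (t : ℝ) (w : EuclideanSpace ℝ (Fin 2)) : ℝ :=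
  ⟪w, gradient Faux (Pt t)⟫ + (1 / 2) * ⟪w, fderiv ℝ (gradient Faux) (Pt t) w⟫

private lemma part1 (Δ : ℝ) (hΔ : 0 < Δ) :
    ∃ t₀ > (0 : ℝ), ∀ t ∈ Set.Ioo (0 : ℝ) t₀, ∀ σ ∈ ({1, -1} : Set ℝ),
      ‖Sv Δ σ t‖ ≤ Δ ∧ ∀ w : EuclideanSpace ℝ (Fin 2), ‖w‖ ≤ Δ → M t (Sv Δ σ t) ≤ M t w := by
  refine ⟨min (1/2) (Δ/2), by positivity, ?_⟩
  rintro t ⟨ht0, htlt⟩ σ hσ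
  have hσ' : σ = 1 ∨ σ = -1 := by simpa using hσ
  have ht2 : t < 1/2 := lt_of_lt_of_le htlt (min_le_left _ _)
  have htΔ : t < Δ/2 := lt_of_lt_of_le htlt (min_le_right _ _)
  have ht1 : t - 1 ≠ 0 := sub_ne_zero.mpr (by linarith)
  obtain ⟨hD1, hD2⟩ := sqarg Δ t ht0 ht2 htΔ
  have hD : 0 ≤ Δ ^ 2 - t ^ 2 * (t - 2) ^ 2 / (4 * (t - 1) ^ 2) := by linarith
  refine ⟨le_of_eq (norm_s Δ t σ hσ' hΔ.le hD ht1), ?_⟩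
  intro w hw
  have hw2 : (w 0) ^ 2 + (w 1) ^ 2 ≤ Δ ^ 2 := by
    have h1 : ‖w‖ ^ 2 ≤ Δ ^ 2 := pow_le_pow_left₀ (norm_nonneg w) hw 2
    have h2 : (w 0) ^ 2 + (w 1) ^ 2 = ‖w‖ ^ 2 := by
      rw [EuclideanSpace.norm_eq, Fin.sum_univ_two, Real.sq_sqrt (by positivity)]
      simp [sq_abs]
    linarith
  have c0 : (Sv Δ σ t) 0 =
      σ * Real.sqrt (Δ ^ 2 - t ^ 2 * (t - 2) ^ 2 / (4 * (t - 1) ^ 2)) := rfl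
  have c1 : (Sv Δ σ t) 1 = t * (t - 2) / (2 * (t - 1)) := rfl
  have e1 := m_val t (Sv Δ σ t)
  have e2 := m_val t w
  rw [c0, c1] at e1
  show M t (Sv Δ σ t) ≤ M t w
  unfold M
  rw [e1, e2]
  have hσ2 : σ ^ 2 = 1 := by rcases hσ' with h | h <;> simp [h]
  have hA : (t * (t - 2) / (2 * (t - 1))) ^ 2 = t ^ 2 * (t - 2) ^ 2 / (4 * (t - 1) ^ 2) := by
    field_simp
    ring
  have hs1 : (σ * Real.sqrt (Δ ^ 2 - t ^ 2 * (t - 2) ^ 2 / (4 * (t - 1) ^ 2))) ^ 2 =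
      Δ ^ 2 - (t * (t - 2) / (2 * (t - 1))) ^ 2 := by
    rw [mul_pow, Real.sq_sqrt hD, hσ2, one_mul, hA]
  exact scalar_ineq Δ t (w 0) (w 1) _ ht0 ht2 hw2 hs1

end TRaux

/-- Failure of the exact trust-region step near the non-isolated minima of
`f(x,y) = (x²+y²-1)²`: at `p(t) = (0, 1-t)` for small `t > 0`, the vectors `s±(t)` are global
solutions of the trust-region subproblem with radius `Δ`, and `s±(t) → (±Δ, 0)` as `t → 0⁺`;
so the exact step does not vanish as the base point approaches the solution set. -/
theorem trust_region_failure (Δ : ℝ) (hΔ : 0 < Δ) :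
    letI f : EuclideanSpace ℝ (Fin 2) → ℝ := fun q => ((q 0) ^ 2 + (q 1) ^ 2 - 1) ^ 2
    letI p : ℝ → EuclideanSpace ℝ (Fin 2) :=
      fun t => (WithLp.equiv 2 (Fin 2 → ℝ)).symm ![0, 1 - t]
    letI s : ℝ → ℝ → EuclideanSpace ℝ (Fin 2) := fun σ t =>
      (WithLp.equiv 2 (Fin 2 → ℝ)).symm
        ![σ * Real.sqrt (Δ ^ 2 - t ^ 2 * (t - 2) ^ 2 / (4 * (t - 1) ^ 2)),
          t * (t - 2) / (2 * (t - 1))]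
    letI m : ℝ → EuclideanSpace ℝ (Fin 2) → ℝ := fun t w =>
      ⟪w, gradient f (p t)⟫ + (1 / 2) * ⟪w, fderiv ℝ (gradient f) (p t) w⟫
    (∃ t₀ > (0 : ℝ), ∀ t ∈ Set.Ioo (0 : ℝ) t₀, ∀ σ ∈ ({1, -1} : Set ℝ),
      ‖s σ t‖ ≤ Δ ∧ ∀ w : EuclideanSpace ℝ (Fin 2), ‖w‖ ≤ Δ → m t (s σ t) ≤ m t w) ∧
    ∀ σ ∈ ({1, -1} : Set ℝ),
      Filter.Tendsto (fun t => s σ t) (𝓝[>] (0 : ℝ))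
        (𝓝 ((WithLp.equiv 2 (Fin 2 → ℝ)).symm ![σ * Δ, 0])) := by
  exact ⟨part1 Δ hΔ, fun σ _ => tendsto_s Δ σ hΔ⟩
end

section
/- Let f : ℝⁿ → ℝ be differentiable and suppose a sequence (x_k) converges to x̄, where x̄ is a local minimum with value f* around which the PL inequality f(x) - f* ≤ (1/(2μ))‖∇f(x)‖² holds. If the sequence eventually satisfies the sufficient decrease f(x_k) - f(x_{k+1}) ≥ ω‖∇f(x_k)‖² with ω > 0 and 2ωμ ≤ 1, then f(x_k) - f* converges to 0 at the linear rate 1 - 2ωμ, i.e., f(x_{k+1}) - f* ≤ (1 - 2ωμ)(f(x_k) - f*) for all large k; moreover ‖∇f(x_k)‖ ≤ √((f(x_k)-f*)/ω) and dist(x_k, S) ≤ √((2/μ)(f(x_k)-f*)) for all large k, where S is the set of local minima with value f*. -/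
open Metric Filter Topology

set_option maxHeartbeats 1000000 in
/-- Key quadratic-growth step: a penalized minimization on a compact ball produces a nearby
local minimizer with value `f xb`. -/
lemma qg_step {n : ℕ}
    (f : EuclideanSpace ℝ (Fin n) → ℝ) (hf : Differentiable ℝ f)
    (xb : EuclideanSpace ℝ (Fin n)) (μ : ℝ) (hμ : 0 < μ) (R : ℝ) (hR : 0 < R)
    (hreg : ∀ y ∈ Metric.closedBall xb (2 * R),
      f xb ≤ f y ∧ f y - f xb ≤ (1 / (2 * μ)) * ‖gradient f y‖ ^ 2)
    (x' : EuclideanSpace ℝ (Fin n)) (hx' : x' ∈ Metric.closedBall xb R)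
    (c' : ℝ) (hc'0 : 0 < c') (hc' : c' < Real.sqrt (μ / 2))
    (hfit : Real.sqrt (f x' - f xb) / c' ≤ R / 2) :
    ∃ y, (IsLocalMin f y ∧ f y = f xb) ∧
      dist x' y ≤ Real.sqrt (f x' - f xb) / c' := by
  have hK : IsCompact (Metric.closedBall xb (2 * R)) := isCompact_closedBall _ _
  set h : EuclideanSpace ℝ (Fin n) → ℝ :=
    fun z => Real.sqrt (f z - f xb) + c' * dist z x' with hh
  have hcont : Continuous h := by
    exact (Real.continuous_sqrt.comp ((hf.continuous).sub continuous_const)).add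
      (continuous_const.mul (continuous_id.dist continuous_const))
  obtain ⟨y, hyK, hymin⟩ := hK.exists_isMinOn
    (⟨xb, by simp [le_of_lt (by positivity : (0:ℝ) < 2*R)]⟩) hcont.continuousOn
  have hx'K : x' ∈ Metric.closedBall xb (2 * R) :=
    Metric.closedBall_subset_closedBall (by linarith) hx'
  have hyx' : Real.sqrt (f y - f xb) + c' * dist y x' ≤ Real.sqrt (f x' - f xb) := by
    simpa [hh] using hymin hx'K
  have hsq0 : 0 ≤ Real.sqrt (f y - f xb) := Real.sqrt_nonneg _
  have hdistyx' : dist y x' ≤ Real.sqrt (f x' - f xb) / c' := by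
    rw [le_div_iff₀ hc'0]
    nlinarith [dist_nonneg (x := y) (y := x')]
  have hyball : y ∈ Metric.ball xb (2 * R) := by
    have h1 : dist y xb ≤ dist y x' + dist x' xb := dist_triangle _ _ _
    have h2 : dist x' xb ≤ R := Metric.mem_closedBall.1 hx'
    have h3 : dist y x' ≤ R / 2 := hdistyx'.trans hfit
    exact Metric.mem_ball.2 (by linarith)
  -- y has value f xb
  have hfy : f y = f xb := by
    by_contra hne
    have hfyge : f xb ≤ f y := (hreg y hyK).1
    have he : 0 < f y - f xb := by
      rcases lt_or_eq_of_le hfyge with h | h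
      · linarith
      · exact absurd h.symm hne
    set e : ℝ := f y - f xb with hedef
    set v : EuclideanSpace ℝ (Fin n) := gradient f y with hv
    have hPLy : e ≤ (1 / (2 * μ)) * ‖v‖ ^ 2 := (hreg y hyK).2
    have hv2 : 2 * μ * e ≤ ‖v‖ ^ 2 := by
      rw [div_mul_eq_mul_div, one_mul, le_div_iff₀ (by positivity)] at hPLy
      nlinarith
    have hvpos : 0 < ‖v‖ := by
      have h2 : 0 < ‖v‖ ^ 2 := lt_of_lt_of_le (by positivity) hv2
      nlinarith [norm_nonneg v]
    -- y is a local min of h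
    have hKnhds : Metric.closedBall xb (2 * R) ∈ 𝓝 y :=
      mem_of_superset (Metric.isOpen_ball.mem_nhds hyball) Metric.ball_subset_closedBall
    have hloc : IsLocalMin h y := hymin.isLocalMin hKnhds
    -- the curve t ↦ y - t • v
    set γ : ℝ → EuclideanSpace ℝ (Fin n) := fun t => y - t • v with hγ
    have hγ0 : γ 0 = y := by simp [hγ]
    have hγd : HasDerivAt γ (-v) 0 := by
      exact ((hasDerivAt_const (0:ℝ) y).sub ((hasDerivAt_id (0:ℝ)).smul_const v)).congr_deriv (by simp)
    have hgrad : HasFDerivAt f (InnerProductSpace.toDual ℝ _ v) (γ 0) := by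
      rw [hγ0]; exact (hf y).hasGradientAt.hasFDerivAt
    have had : HasDerivAt (fun t => f (γ t)) (-(‖v‖ ^ 2)) 0 := by
      have h0 := hgrad.comp_hasDerivAt 0 hγd
      have h3 : (InnerProductSpace.toDual ℝ (EuclideanSpace ℝ (Fin n)) v) (-v)
          = -(‖v‖ ^ 2) := by
        rw [InnerProductSpace.toDual_apply_apply, inner_neg_right, real_inner_self_eq_norm_sq]
      rw [h3] at h0
      exact h0
    set b : ℝ → ℝ := fun t => Real.sqrt (f (γ t) - f xb) with hb
    have ha0 : f (γ 0) - f xb = e := by rw [hγ0]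
    have hbd : HasDerivAt b (1 / (2 * Real.sqrt e) * (-(‖v‖ ^ 2))) 0 := by
      have h1 : HasDerivAt (fun t => f (γ t) - f xb) (-(‖v‖ ^ 2)) 0 := had.sub_const _
      have h2 := (Real.hasDerivAt_sqrt (x := f (γ 0) - f xb)
        (by rw [ha0]; exact ne_of_gt he)).comp 0 h1
      exact h2.congr_deriv (by rw [ha0])
    have hb0 : b 0 = Real.sqrt e := by simp [hb, ha0]
    -- one-sided bound on the difference quotient
    have hev : ∀ᶠ t in 𝓝[>] (0:ℝ), -(c' * ‖v‖) ≤ (b t - b 0) / t := by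
      have hγc : Filter.Tendsto γ (𝓝 0) (𝓝 y) := by
        have := hγd.continuousAt.tendsto
        rwa [hγ0] at this
      have hev1 : ∀ᶠ t in 𝓝 (0:ℝ), h y ≤ h (γ t) := hγc.eventually hloc
      filter_upwards [eventually_nhdsWithin_of_eventually_nhds hev1,
        self_mem_nhdsWithin] with t ht htpos
      have htpos' : (0:ℝ) < t := htpos
      have hdist : dist (γ t) x' ≤ dist y x' + t * ‖v‖ := by
        have hgy : dist (γ t) y = t * ‖v‖ := by
          simp [hγ, dist_eq_norm, norm_smul, abs_of_pos htpos']
        calc dist (γ t) x' ≤ dist (γ t) y + dist y x' := dist_triangle _ _ _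
          _ = dist y x' + t * ‖v‖ := by rw [hgy]; ring
      have hht : Real.sqrt (f y - f xb) + c' * dist y x'
          ≤ Real.sqrt (f (γ t) - f xb) + c' * dist (γ t) x' := by
        simpa [hh] using ht
      have hbt : b t = Real.sqrt (f (γ t) - f xb) := by simp [hb]
      have hb0' : b 0 = Real.sqrt (f y - f xb) := by rw [hb0, hedef]
      have hmul : c' * dist (γ t) x' ≤ c' * (dist y x' + t * ‖v‖) :=
        mul_le_mul_of_nonneg_left hdist hc'0.le
      rw [le_div_iff₀ htpos']
      nlinarith
    have hslope : Filter.Tendsto (fun t => (b t - b 0) / t) (𝓝[>] (0:ℝ))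
        (𝓝 (1 / (2 * Real.sqrt e) * (-(‖v‖ ^ 2)))) := by
      have h1 := hasDerivAt_iff_tendsto_slope.1 hbd
      have h2 : Filter.Tendsto (slope b 0) (𝓝[>] (0:ℝ))
          (𝓝 (1 / (2 * Real.sqrt e) * (-(‖v‖ ^ 2)))) :=
        h1.mono_left (nhdsWithin_mono _ (fun t ht => ne_of_gt ht))
      refine h2.congr (fun t => ?_)
      simp [slope, div_eq_inv_mul]
    have hder : -(c' * ‖v‖) ≤ 1 / (2 * Real.sqrt e) * (-(‖v‖ ^ 2)) :=
      ge_of_tendsto hslope hev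
    have hse : 0 < Real.sqrt e := Real.sqrt_pos.2 he
    have hvle : ‖v‖ ≤ 2 * c' * Real.sqrt e := by
      have h1 : ‖v‖ ^ 2 / (2 * Real.sqrt e) ≤ c' * ‖v‖ := by
        have := neg_le_neg hder
        rw [neg_neg] at this
        calc ‖v‖ ^ 2 / (2 * Real.sqrt e) = -(1 / (2 * Real.sqrt e) * (-(‖v‖ ^ 2))) := by
              field_simp
          _ ≤ c' * ‖v‖ := by linarith
      rw [div_le_iff₀ (by positivity)] at h1
      nlinarith
    -- contradiction with PL
    have hsq : Real.sqrt e ^ 2 = e := Real.sq_sqrt he.le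
    have hfin : Real.sqrt (μ / 2) ≤ c' := by
      have h4 : μ / 2 ≤ c' ^ 2 := by nlinarith
      calc Real.sqrt (μ / 2) ≤ Real.sqrt (c' ^ 2) := Real.sqrt_le_sqrt h4
        _ = c' := Real.sqrt_sq hc'0.le
    linarith
  refine ⟨y, ⟨?_, hfy⟩, by rwa [dist_comm]⟩
  have hball : Metric.ball xb (2 * R) ∈ 𝓝 y := Metric.isOpen_ball.mem_nhds hyball
  refine Filter.eventually_of_mem hball (fun z hz => ?_)
  rw [hfy]
  exact (hreg z (Metric.ball_subset_closedBall hz)).1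

set_option maxHeartbeats 1000000 in
/-- Quadratic growth: near `xb`, the distance to the solution set is controlled by the
function gap, with the sharp constant. -/
lemma qg_aux {n : ℕ}
    (f : EuclideanSpace ℝ (Fin n) → ℝ) (hf : Differentiable ℝ f)
    (xb : EuclideanSpace ℝ (Fin n)) (μ : ℝ) (hμ : 0 < μ) (R : ℝ) (hR : 0 < R)
    (hreg : ∀ y ∈ Metric.closedBall xb (2 * R),
      f xb ≤ f y ∧ f y - f xb ≤ (1 / (2 * μ)) * ‖gradient f y‖ ^ 2)
    (x' : EuclideanSpace ℝ (Fin n)) (hx' : x' ∈ Metric.closedBall xb R)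
    (hsmall : Real.sqrt (f x' - f xb) ≤ Real.sqrt (μ / 2) * R / 4) :
    Metric.infDist x' {y | IsLocalMin f y ∧ f y = f xb}
      ≤ Real.sqrt ((2 / μ) * (f x' - f xb)) := by
  set c : ℝ := Real.sqrt (μ / 2) with hc
  have hcpos : 0 < c := Real.sqrt_pos.2 (by positivity)
  set g : ℝ := Real.sqrt (f x' - f xb) with hg
  have hgnn : 0 ≤ g := Real.sqrt_nonneg _
  have htarget : Real.sqrt ((2 / μ) * (f x' - f xb)) = g / c := by
    rw [Real.sqrt_mul (by positivity) _]
    have h2 : (2 / μ : ℝ) = (μ / 2)⁻¹ := by field_simp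
    rw [h2, Real.sqrt_inv, hg, hc]
    ring
  rw [htarget]
  by_contra hcon
  push_neg at hcon
  set d : ℝ := Metric.infDist x' {y | IsLocalMin f y ∧ f y = f xb} with hd
  have hgc_lt_d : g / c < d := hcon
  -- choose penalty parameter
  set m : ℝ := min ((g / c + d) / 2) (R / 2) with hm
  have hmpos : 0 < m := by
    have h1 : 0 < (g / c + d) / 2 := by
      have : (0:ℝ) ≤ g / c := by positivity
      linarith
    exact lt_min h1 (by linarith)
  have hgcR : g / c ≤ R / 4 := by
    rw [div_le_iff₀ hcpos]
    nlinarith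
  have hgc_lt_m : g / c < m := lt_min (by linarith) (by linarith)
  set c' : ℝ := g / m with hc'
  set c'' : ℝ := max c' (c / 2) with hc''
  have hc''pos : 0 < c'' := lt_of_lt_of_le (by positivity) (le_max_right _ _)
  have hc''lt : c'' < c := by
    refine max_lt ?_ (by linarith)
    rw [hc', div_lt_iff₀ hmpos]
    have h7 : g < m * c := (div_lt_iff₀ hcpos).1 hgc_lt_m
    linarith [mul_comm m c]
  have hkey : g / c'' ≤ m := by
    rcases le_or_gt c' (c / 2) with hcc | hcc
    · rw [hc'', max_eq_right hcc, div_le_iff₀ (by positivity)]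
      have h5 : g ≤ c / 2 * m := by
        have h6 := hcc
        rw [hc', div_le_iff₀ hmpos] at h6
        linarith
      linarith
    · rw [hc'', max_eq_left hcc.le]
      have hc'pos : 0 < c' := lt_trans (by positivity) hcc
      have hgpos : 0 < g := by
        by_contra hgz
        push_neg at hgz
        have hg0 : g = 0 := le_antisymm hgz hgnn
        rw [hc', hg0] at hcc
        simp at hcc
        linarith
      have : g / c' = m := by
        rw [hc']
        field_simp
      exact this.le
  have hfit : g / c'' ≤ R / 2 := hkey.trans (min_le_right _ _)
  obtain ⟨y, hyS, hydist⟩ := qg_step f hf xb μ hμ R hR hreg x' hx' c'' hc''pos hc''lt hfit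
  have h1 : d ≤ dist x' y := Metric.infDist_le_dist_of_mem hyS
  have h3 : m < d := by
    have := min_le_left ((g / c + d) / 2) (R / 2)
    rw [← hm] at this
    linarith
  have : d ≤ m := le_trans h1 (le_trans hydist hkey)
  linarith

set_option maxHeartbeats 1000000 in
/-- Linear convergence under PL and sufficient decrease: if `(x_k)` converges to a local
minimum `xb` around which the PL inequality holds, and the sufficient decrease
`f(x_k) - f(x_{k+1}) ≥ ω‖∇f(x_k)‖²` holds eventually, then `f(x_k) - f*` decays linearly
with rate `1 - 2ωμ`, and the gradient norms and distances to the solution set are bounded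
accordingly. -/
theorem linear_rate_sufficient_decrease {n : ℕ}
    (f : EuclideanSpace ℝ (Fin n) → ℝ) (hf : Differentiable ℝ f)
    (xb : EuclideanSpace ℝ (Fin n)) (hmin : IsLocalMin f xb)
    (μ ω : ℝ) (hμ : 0 < μ) (hω : 0 < ω) (hωμ : 2 * ω * μ ≤ 1)
    (S : Set (EuclideanSpace ℝ (Fin n)))
    (hS : S = {y | IsLocalMin f y ∧ f y = f xb})
    (x : ℕ → EuclideanSpace ℝ (Fin n))
    (hconv : Filter.Tendsto x Filter.atTop (𝓝 xb))
    (hPL : ∀ᶠ y in 𝓝 xb, f y - f xb ≤ (1 / (2 * μ)) * ‖gradient f y‖ ^ 2)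
    (hdec : ∀ᶠ k in Filter.atTop, ω * ‖gradient f (x k)‖ ^ 2 ≤ f (x k) - f (x (k + 1))) :
    ∀ᶠ k in Filter.atTop,
      f (x (k + 1)) - f xb ≤ (1 - 2 * ω * μ) * (f (x k) - f xb) ∧
      ‖gradient f (x k)‖ ≤ Real.sqrt ((f (x k) - f xb) / ω) ∧
      Metric.infDist (x k) S ≤ Real.sqrt ((2 / μ) * (f (x k) - f xb)) := by
  have hboth : ∀ᶠ y in 𝓝 xb, f xb ≤ f y ∧ f y - f xb ≤ (1 / (2 * μ)) * ‖gradient f y‖ ^ 2 :=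
    hmin.and hPL
  obtain ⟨ρ, hρpos, hρ⟩ := Metric.eventually_nhds_iff_ball.1 hboth
  set R : ℝ := ρ / 4 with hRdef
  have hRpos : 0 < R := by positivity
  have hreg : ∀ y ∈ Metric.closedBall xb (2 * R),
      f xb ≤ f y ∧ f y - f xb ≤ (1 / (2 * μ)) * ‖gradient f y‖ ^ 2 := by
    intro y hy
    refine hρ y ?_
    have h1 := Metric.mem_closedBall.1 hy
    rw [hRdef] at h1
    exact Metric.mem_ball.2 (by linarith)
  set c : ℝ := Real.sqrt (μ / 2) with hc
  have hcpos : 0 < c := Real.sqrt_pos.2 (by positivity)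
  have E1 : ∀ᶠ k in atTop, x k ∈ Metric.closedBall xb R :=
    hconv.eventually (Metric.closedBall_mem_nhds _ hRpos)
  have E2 : ∀ᶠ k in atTop, x (k + 1) ∈ Metric.closedBall xb (2 * R) :=
    (hconv.comp (tendsto_add_atTop_nat 1)).eventually
      (Metric.closedBall_mem_nhds xb (by positivity : (0:ℝ) < 2 * R))
  have hfc : Filter.Tendsto (fun k => f (x k) - f xb) atTop (𝓝 0) := by
    have := ((hf.continuous.tendsto xb).comp hconv).sub_const (f xb)
    simpa using this
  have E3 : ∀ᶠ k in atTop, Real.sqrt (f (x k) - f xb) ≤ c * R / 4 := by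
    have h1 : Filter.Tendsto (fun k => Real.sqrt (f (x k) - f xb)) atTop (𝓝 0) := by
      have := (Real.continuous_sqrt.tendsto 0).comp hfc
      rw [Real.sqrt_zero] at this
      exact this
    exact h1.eventually_le_const (by positivity)
  filter_upwards [E1, E2, E3, hdec] with k h1 h2 h3 hd
  have hxk2 : x k ∈ Metric.closedBall xb (2 * R) :=
    Metric.closedBall_subset_closedBall (by linarith) h1
  have hPLk := (hreg _ hxk2).2
  have hge0 : f xb ≤ f (x k) := (hreg _ hxk2).1
  have hge1 : f xb ≤ f (x (k + 1)) := (hreg _ h2).1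
  have hgradlb : 2 * μ * (f (x k) - f xb) ≤ ‖gradient f (x k)‖ ^ 2 := by
    rw [div_mul_eq_mul_div, one_mul, le_div_iff₀ (by positivity)] at hPLk
    nlinarith
  refine ⟨by nlinarith [mul_le_mul_of_nonneg_left hgradlb hω.le], ?_, ?_⟩
  · rw [Real.le_sqrt (norm_nonneg _) (div_nonneg (by linarith) hω.le), le_div_iff₀ hω]
    nlinarith
  · rw [hS]
    refine qg_aux f hf xb μ hμ R hRpos hreg (x k) h1 ?_
    rw [← hc]
    exact h3.trans (le_of_eq (by ring))
end
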